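/- arXiv:0805.1539 — 7 statements merged into one kernel-verified Lean document; each statement's English description precedes it below -/
import Mathlib

section
/- Let X be a geodesic metric space with convex metric (Busemann non-positively curved): for any x, y, z ∈ X, the midpoint m of x,y and the midpoint n of x,z satisfy d(m,n) ≤ d(y,z)/2. Given 4p points y_{i,j} (i ∈ {0,1,2,3}, j ∈ {1,…,p}, p ≥ 2) such that each of the listed quadruples (y_{0,j}, y_{1,j}, y_{2,j}, y_{3,j}) for j = 1,…,p, and the 'shifted' quadruples (y_{0,2}, y_{1,1}, y_{2,p}, y_{3,p-1}), (y_{0,3}, y_{1,2}, y_{2,1}, y_{3,p}), (y_{0,j+3}, y_{1,j+2}, y_{2,j+1}, y_{3,j}) for appropriate indices, and (y_{0,1}, y_{1,p}, y_{2,p-1}, y_{3,p-2}), consists of four points lying in order on a geodesic segment and dividing it into three equal parts. Then all points y_{1,j} (j = 1,…,p) coincide, and all points y_{2,j} coincide. -/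
private lemma tape_const {p : ℕ} [NeZero p] {α : Type*} (w : ZMod p → α)
    (h : ∀ j, w j = w (j + 1)) : ∀ j k : ZMod p, w j = w k := by
  have key : ∀ (n : ℕ) (j : ZMod p), w j = w (j + (n : ZMod p)) := by
    intro n
    induction n with
    | zero => intro j; simp
    | succ m ih =>
      intro j
      have e : ((m + 1 : ℕ) : ZMod p) = (m : ZMod p) + 1 := by push_cast; ring
      rw [e, ← add_assoc]
      exact (ih j).trans (h (j + (m : ZMod p)))
  intro j k
  have hk : j + (((k - j).val : ℕ) : ZMod p) = k := by
    have h2 : (((k - j).val : ℕ) : ZMod p) = k - j := ZMod.natCast_rightInverse (k - j)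
    rw [h2]; ring
  rw [key ((k - j).val) j, hk]

private lemma tape_seq {p : ℕ} [NeZero p] (a b c d : ZMod p → ℝ)
    (h12 : ∀ j, a j ≤ c j) (h23 : ∀ j, c j ≤ (b (j - 1) + b j) / 2)
    (h45 : ∀ j, b j ≤ d j) (h56 : ∀ j, d j ≤ (a j + a (j + 1)) / 2) :
    ∀ j, a j = c j ∧ c j = (b (j - 1) + b j) / 2 ∧ b j = d j ∧ d j = (a j + a (j + 1)) / 2 := by
  have hs3 : ∑ j : ZMod p, (b (j - 1) + b j) / 2 = ∑ j : ZMod p, b j := by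
    rw [← Finset.sum_div, Finset.sum_add_distrib,
      Fintype.sum_equiv (Equiv.subRight (1 : ZMod p)) (fun j => b (j - 1)) b (fun x => rfl)]
    ring
  have hs6 : ∑ j : ZMod p, (a j + a (j + 1)) / 2 = ∑ j : ZMod p, a j := by
    rw [← Finset.sum_div, Finset.sum_add_distrib,
      Fintype.sum_equiv (Equiv.addRight (1 : ZMod p)) (fun j => a (j + 1)) a (fun x => rfl)]
    ring
  have s12 : ∑ j : ZMod p, a j ≤ ∑ j : ZMod p, c j :=
    Finset.sum_le_sum fun i _ => h12 i
  have s23 : ∑ j : ZMod p, c j ≤ ∑ j : ZMod p, (b (j - 1) + b j) / 2 :=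
    Finset.sum_le_sum fun i _ => h23 i
  have s45 : ∑ j : ZMod p, b j ≤ ∑ j : ZMod p, d j :=
    Finset.sum_le_sum fun i _ => h45 i
  have s56 : ∑ j : ZMod p, d j ≤ ∑ j : ZMod p, (a j + a (j + 1)) / 2 :=
    Finset.sum_le_sum fun i _ => h56 i
  have e12 : ∑ j : ZMod p, a j = ∑ j : ZMod p, c j := by linarith
  have e23 : ∑ j : ZMod p, c j = ∑ j : ZMod p, (b (j - 1) + b j) / 2 := by linarith
  have e45 : ∑ j : ZMod p, b j = ∑ j : ZMod p, d j := by linarith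
  have e56 : ∑ j : ZMod p, d j = ∑ j : ZMod p, (a j + a (j + 1)) / 2 := by linarith
  intro j
  exact ⟨(Finset.sum_eq_sum_iff_of_le (fun i _ => h12 i)).1 e12 j (Finset.mem_univ j),
    (Finset.sum_eq_sum_iff_of_le (fun i _ => h23 i)).1 e23 j (Finset.mem_univ j),
    (Finset.sum_eq_sum_iff_of_le (fun i _ => h45 i)).1 e45 j (Finset.mem_univ j),
    (Finset.sum_eq_sum_iff_of_le (fun i _ => h56 i)).1 e56 j (Finset.mem_univ j)⟩

private lemma tape_harmonic {p : ℕ} [NeZero p] (a b : ZMod p → ℝ)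
    (hA : ∀ j, 2 * a j = b (j - 1) + b j) (hB : ∀ j, 2 * b j = a j + a (j + 1)) :
    (∀ j, a j = a 0) ∧ (∀ j, b j = a 0) := by
  have hc : ∀ j : ZMod p, a (j + 1) - a j = a j - a (j - 1) := by
    intro j
    have h1 := hA j
    have h2 := hB j
    have h3 := hB (j - 1)
    rw [show j - 1 + 1 = j from by ring] at h3
    linarith
  have hstep : ∀ j : ZMod p, a (j + 1 + 1) - a (j + 1) = a (j + 1) - a j := by
    intro j
    have := hc (j + 1)
    rwa [show j + 1 - 1 = j from by ring] at this
  have hcastconst : ∀ n : ℕ, a ((n : ZMod p) + 1) - a (n : ZMod p) = a 1 - a 0 := by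
    intro n
    induction n with
    | zero => simp
    | succ m ih =>
      have e : ((m + 1 : ℕ) : ZMod p) = (m : ZMod p) + 1 := by push_cast; ring
      rw [e, hstep (m : ZMod p)]
      exact ih
  have call : ∀ j : ZMod p, a (j + 1) - a j = a 1 - a 0 := by
    intro j
    have h2 : ((j.val : ℕ) : ZMod p) = j := ZMod.natCast_rightInverse j
    have := hcastconst j.val
    rwa [h2] at this
  have hsum0 : ∑ j : ZMod p, (a (j + 1) - a j) = 0 := by
    rw [Finset.sum_sub_distrib,
      Fintype.sum_equiv (Equiv.addRight (1 : ZMod p)) (fun j => a (j + 1)) a (fun x => rfl),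
      sub_self]
  have hsum : ∑ j : ZMod p, (a (j + 1) - a j) = (p : ℝ) * (a 1 - a 0) := by
    rw [Finset.sum_congr rfl fun j _ => call j, Finset.sum_const, Finset.card_univ, ZMod.card, nsmul_eq_mul]
  have hp0 : (p : ℝ) ≠ 0 := Nat.cast_ne_zero.2 (NeZero.ne p)
  have h10 : a 1 - a 0 = 0 := by
    rw [hsum0] at hsum
    rcases mul_eq_zero.1 hsum.symm with h | h
    · exact absurd h hp0
    · exact h
  have hconsec : ∀ j : ZMod p, a j = a (j + 1) := by
    intro j
    have := call j
    rw [h10] at this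
    linarith
  have haconst : ∀ j : ZMod p, a j = a 0 := fun j => tape_const a hconsec j 0
  refine ⟨haconst, fun j => ?_⟩
  have h2 := hB j
  rw [haconst j, haconst (j + 1)] at h2
  linarith

private lemma tape_doubling {X : Type*} [MetricSpace X]
    (hconv : ∀ x y z m n : X,
      dist x m = dist x y / 2 → dist m y = dist x y / 2 →
      dist x n = dist x z / 2 → dist n z = dist x z / 2 →
      dist m n ≤ dist y z / 2)
    {p : ℕ} [NeZero p] (u : ZMod p → X) (t : ℝ)
    (h1 : ∀ j : ZMod p, dist (u j) (u (j + 1)) = t)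
    (h2 : ∀ j : ZMod p, dist (u j) (u (j + 2)) = 2 * t) :
    t = 0 := by
  have ht0 : 0 ≤ t := h1 0 ▸ dist_nonneg
  have key : ∀ n : ℕ,
      (∀ j : ZMod p, dist (u j) (u (j + ((2 ^ n : ℕ) : ZMod p))) = 2 ^ n * t) ∧
      (∀ j : ZMod p, dist (u j) (u (j + ((2 ^ (n + 1) : ℕ) : ZMod p))) = 2 ^ (n + 1) * t) := by
    intro n
    induction n with
    | zero =>
      constructor
      · intro j; simpa using h1 j
      · intro j
        have e : ((2 ^ 1 : ℕ) : ZMod p) = 2 := by push_cast; ring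
        rw [e]
        simpa using h2 j
    | succ k ih =>
      refine ⟨ih.2, ?_⟩
      intro j
      set g : ZMod p := ((2 ^ k : ℕ) : ZMod p) with hg
      have A : ∀ j' : ZMod p, dist (u j') (u (j' + g)) = 2 ^ k * t := ih.1
      have B : ∀ j' : ZMod p, dist (u j') (u (j' + g + g)) = 2 ^ (k + 1) * t := by
        intro j'
        have e : j' + ((2 ^ (k + 1) : ℕ) : ZMod p) = j' + g + g := by
          rw [hg]; push_cast; ring
        have := ih.2 j'
        rwa [e] at this
      have egoal : j + ((2 ^ (k + 1 + 1) : ℕ) : ZMod p) = j + g + g + g + g := by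
        rw [hg]; push_cast; ring
      rw [egoal]
      have H := hconv (u (j + g + g)) (u j) (u (j + g + g + g + g)) (u (j + g))
          (u (j + g + g + g))
          (by rw [dist_comm (u (j + g + g)) (u (j + g)), A (j + g),
                dist_comm (u (j + g + g)) (u j), B j]; ring)
          (by rw [dist_comm (u (j + g)) (u j), A j,
                dist_comm (u (j + g + g)) (u j), B j]; ring)
          (by rw [A (j + g + g), B (j + g + g)]; ring)
          (by rw [A (j + g + g + g), B (j + g + g)]; ring)
      rw [B (j + g)] at H
      have htri := dist_triangle (u j) (u (j + g + g)) (u (j + g + g + g + g))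
      rw [B j, B (j + g + g)] at htri
      have hpow : (2 : ℝ) ^ (k + 1 + 1) = 2 * 2 ^ (k + 1) := by ring
      rw [hpow]
      linarith
  have hC : ∀ n : ℕ, (2 : ℝ) ^ n * t ≤
      Finset.univ.sup' Finset.univ_nonempty (fun j : ZMod p => dist (u 0) (u j)) := by
    intro n
    have h := (key n).1 0
    calc (2 : ℝ) ^ n * t = dist (u 0) (u ((0 : ZMod p) + ((2 ^ n : ℕ) : ZMod p))) := h.symm
      _ ≤ _ := Finset.le_sup' (fun j : ZMod p => dist (u 0) (u j)) (Finset.mem_univ _)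
  by_contra hne
  have ht : 0 < t := lt_of_le_of_ne ht0 (Ne.symm hne)
  set C : ℝ := Finset.univ.sup' Finset.univ_nonempty (fun j : ZMod p => dist (u 0) (u j)) with hCdef
  obtain ⟨n, hn⟩ := pow_unbounded_of_one_lt (C / t) (one_lt_two (α := ℝ))
  have h1' := hC n
  rw [div_lt_iff₀ ht] at hn
  linarith

/-- The tape lemma: in a geodesic space with convex (Busemann) metric, given `4p` points
`y i j` (`i ∈ Fin 4`, `j ∈ ZMod p`, `p ≥ 2`) such that each row quadruple
`(y 0 j, y 1 j, y 2 j, y 3 j)` and each shifted quadruple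
`(y 0 (j+1), y 1 j, y 2 (j-1), y 3 (j-2))` lies in order on a geodesic segment dividing it
into three equal parts, all the points `y 1 j` coincide and all the points `y 2 j`
coincide. -/
theorem stmt3 {X : Type*} [MetricSpace X]
    (hgeo : ∀ x y : X, ∃ m : X, dist x m = dist x y / 2 ∧ dist m y = dist x y / 2)
    (hconv : ∀ x y z m n : X,
      dist x m = dist x y / 2 → dist m y = dist x y / 2 →
      dist x n = dist x z / 2 → dist n z = dist x z / 2 →
      dist m n ≤ dist y z / 2)
    (p : ℕ) (hp : 2 ≤ p)
    (y : Fin 4 → ZMod p → X)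
    (B3 : X → X → X → X → Prop)
    (hB3 : ∀ a b c d : X, B3 a b c d ↔
      (dist a b = dist a d / 3 ∧ dist b c = dist a d / 3 ∧ dist c d = dist a d / 3 ∧
        dist a c = 2 * dist a d / 3 ∧ dist b d = 2 * dist a d / 3))
    (hrows : ∀ j : ZMod p, B3 (y 0 j) (y 1 j) (y 2 j) (y 3 j))
    (hshift : ∀ j : ZMod p, B3 (y 0 (j + 1)) (y 1 j) (y 2 (j - 1)) (y 3 (j - 2))) :
    (∀ j k : ZMod p, y 1 j = y 1 k) ∧ (∀ j k : ZMod p, y 2 j = y 2 k) := by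
  haveI : NeZero p := ⟨by omega⟩
  simp only [hB3] at hrows hshift
  -- the four key convexity inequalities
  have h12 : ∀ j : ZMod p,
      dist (y 1 j) (y 1 (j + 1)) ≤ dist (y 2 (j - 1)) (y 2 (j + 1)) / 2 := by
    intro j
    obtain ⟨s1, s2, s3, s4, s5⟩ := hshift j
    obtain ⟨r1, r2, r3, r4, r5⟩ := hrows (j + 1)
    exact hconv (y 0 (j + 1)) (y 2 (j - 1)) (y 2 (j + 1)) (y 1 j) (y 1 (j + 1))
      (by rw [s1, s4]; ring) (by rw [s2, s4]; ring)
      (by rw [r1, r4]; ring) (by rw [r2, r4]; ring)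
  have h23 : ∀ j : ZMod p,
      dist (y 2 (j - 1)) (y 2 (j + 1)) / 2 ≤
        (dist (y 2 (j - 1)) (y 2 (j - 1 + 1)) + dist (y 2 j) (y 2 (j + 1))) / 2 := by
    intro j
    rw [show j - 1 + 1 = j from by ring]
    have := dist_triangle (y 2 (j - 1)) (y 2 j) (y 2 (j + 1))
    linarith
  have h45 : ∀ j : ZMod p,
      dist (y 2 j) (y 2 (j + 1)) ≤ dist (y 1 j) (y 1 (j + 2)) / 2 := by
    intro j
    obtain ⟨r1, r2, r3, r4, r5⟩ := hrows j
    have hs := hshift (j + 2)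
    rw [show j + 2 - 1 = j + 1 from by ring, show j + 2 - 2 = j from by ring] at hs
    obtain ⟨s1, s2, s3, s4, s5⟩ := hs
    exact hconv (y 3 j) (y 1 j) (y 1 (j + 2)) (y 2 j) (y 2 (j + 1))
      (by rw [dist_comm (y 3 j) (y 2 j), r3, dist_comm (y 3 j) (y 1 j), r5]; ring)
      (by rw [dist_comm (y 2 j) (y 1 j), r2, dist_comm (y 3 j) (y 1 j), r5]; ring)
      (by rw [dist_comm (y 3 j) (y 2 (j + 1)), s3, dist_comm (y 3 j) (y 1 (j + 2)), s5]; ring)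
      (by rw [dist_comm (y 2 (j + 1)) (y 1 (j + 2)), s2,
            dist_comm (y 3 j) (y 1 (j + 2)), s5]; ring)
  have h56 : ∀ j : ZMod p,
      dist (y 1 j) (y 1 (j + 2)) / 2 ≤
        (dist (y 1 j) (y 1 (j + 1)) + dist (y 1 (j + 1)) (y 1 (j + 1 + 1))) / 2 := by
    intro j
    rw [show j + 1 + 1 = j + 2 from by ring]
    have := dist_triangle (y 1 j) (y 1 (j + 1)) (y 1 (j + 2))
    linarith
  have E := tape_seq (fun j => dist (y 1 j) (y 1 (j + 1)))
    (fun j => dist (y 2 j) (y 2 (j + 1)))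
    (fun j => dist (y 2 (j - 1)) (y 2 (j + 1)) / 2)
    (fun j => dist (y 1 j) (y 1 (j + 2)) / 2)
    h12 h23 h45 h56
  have hA : ∀ j : ZMod p, 2 * dist (y 1 j) (y 1 (j + 1)) =
      dist (y 2 (j - 1)) (y 2 (j - 1 + 1)) + dist (y 2 j) (y 2 (j + 1)) := by
    intro j
    have h1 := (E j).1
    have h2 := (E j).2.1
    linarith
  have hB : ∀ j : ZMod p, 2 * dist (y 2 j) (y 2 (j + 1)) =
      dist (y 1 j) (y 1 (j + 1)) + dist (y 1 (j + 1)) (y 1 (j + 1 + 1)) := by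
    intro j
    have h1 := (E j).2.2.1
    have h2 := (E j).2.2.2
    linarith
  obtain ⟨hac, hbc⟩ := tape_harmonic (fun j => dist (y 1 j) (y 1 (j + 1)))
    (fun j => dist (y 2 j) (y 2 (j + 1))) hA hB
  set t : ℝ := dist (y 1 0) (y 1 (0 + 1)) with htdef
  have ha : ∀ j : ZMod p, dist (y 1 j) (y 1 (j + 1)) = t := fun j => hac j
  have hb : ∀ j : ZMod p, dist (y 2 j) (y 2 (j + 1)) = t := fun j => hbc j
  have hgap2 : ∀ j : ZMod p, dist (y 1 j) (y 1 (j + 2)) = 2 * t := by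
    intro j
    have h1 := (E j).2.2.1
    rw [hb j] at h1
    linarith
  have ht : t = 0 := tape_doubling hconv (y 1) t ha hgap2
  constructor
  · refine tape_const (y 1) fun j => ?_
    have := ha j
    rw [ht] at this
    exact dist_eq_zero.1 this
  · refine tape_const (y 2) fun j => ?_
    have := hb j
    rw [ht] at this
    exact dist_eq_zero.1 this
end

section
/- Let X be a metric space and ξ an equivalence class of asymptotic geodesic rays (an ideal boundary point). Define ρ_ξ(x,y) = inf { d(c(s), d(t)) : s, t ≥ 0 } where c, d are geodesic rays from x and y respectively in the class ξ (i.e., ρ_ξ(x,y) is the infimal distance between the rays [xξ] and [yξ]). Then ρ_ξ is a pseudometric on X: it is nonnegative, symmetric, vanishes on the diagonal, and satisfies the triangle inequality. -/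
/-- A midpoint-convex function on `[0,∞)` that is bounded above is nonincreasing. -/
private lemma midconv_mono (f : ℝ → ℝ) (C : ℝ)
    (hbdd : ∀ t, 0 ≤ t → f t ≤ C)
    (hmid : ∀ t1 t2, 0 ≤ t1 → 0 ≤ t2 → f ((t1 + t2) / 2) ≤ (f t1 + f t2) / 2) :
    ∀ t1 t2, 0 ≤ t1 → t1 ≤ t2 → f t2 ≤ f t1 := by
  intro t1 t2 h1 h12
  by_contra hlt
  push_neg at hlt
  have hδpos : 0 < f t2 - f t1 := by linarith
  set δ := f t2 - f t1 with hδ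
  have hh : 0 < t2 - t1 := by
    rcases lt_or_eq_of_le h12 with h | h
    · linarith
    · exfalso; rw [h] at hlt; exact lt_irrefl _ hlt
  set h : ℝ := t2 - t1 with hhdef
  set g : ℕ → ℝ := fun n => f (t1 + n * h) with hg
  have hpos : ∀ n : ℕ, (0:ℝ) ≤ t1 + n * h := by
    intro n
    have : (0:ℝ) ≤ (n:ℝ) * h := mul_nonneg (Nat.cast_nonneg n) (le_of_lt hh)
    linarith
  have key : ∀ n : ℕ, δ ≤ g (n + 1) - g n := by
    intro n
    induction n with
    | zero =>
      have e0 : t1 + ((0:ℕ):ℝ) * h = t1 := by push_cast; ring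
      have e1 : t1 + (((0:ℕ)+1:ℕ):ℝ) * h = t2 := by push_cast; simp [hhdef]
      simp only [hg, e0, e1, hδ, le_refl]
    | succ k ih =>
      have hmid' := hmid (t1 + k * h) (t1 + (k + 2 : ℕ) * h) (hpos k) (hpos (k+2))
      have emid : (t1 + (k:ℝ) * h + (t1 + ((k + 2 : ℕ):ℝ) * h)) / 2
          = t1 + ((k+1 : ℕ):ℝ) * h := by push_cast; ring
      rw [emid] at hmid'
      have e2 : ((k+2:ℕ):ℝ) = ((k+1:ℕ):ℝ) + 1 := by push_cast; ring
      have : g (k+1) ≤ (g k + g (k+2)) / 2 := hmid'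
      have hk2 : g (k+1+1) = g (k+2) := by norm_num
      rw [hk2]
      linarith [ih]
  have grow : ∀ n : ℕ, g 0 + n * δ ≤ g n := by
    intro n
    induction n with
    | zero => simp
    | succ k ih =>
      have := key k
      push_cast
      push_cast at ih
      linarith
  obtain ⟨n, hn⟩ := exists_nat_gt ((C - g 0) / δ)
  have h1n : (C - g 0) / δ * δ < n * δ := by
    exact mul_lt_mul_of_pos_right hn hδpos
  rw [div_mul_cancel₀ _ (ne_of_gt hδpos)] at h1n
  have := grow n
  have := hbdd (t1 + n * h) (hpos n)
  have hgn : g n ≤ C := this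
  have := grow n
  linarith [hgn, this, h1n]

/-- For an ideal point `ξ` of a Busemann space, represented by an assignment `ray x` of a
geodesic ray from each point `x` (any two of which are asymptotic), the infimal distance
`ρ_ξ(x,y)` between the rays `[xξ]` and `[yξ]` is a pseudometric on `X`. -/
theorem stmt4 {X : Type*} [MetricSpace X]
    (hgeo : ∀ x y : X, ∃ m : X, dist x m = dist x y / 2 ∧ dist m y = dist x y / 2)
    (hconv : ∀ x y z m n : X,
      dist x m = dist x y / 2 → dist m y = dist x y / 2 →
      dist x n = dist x z / 2 → dist n z = dist x z / 2 →
      dist m n ≤ dist y z / 2)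
    (ray : X → ℝ → X)
    (hray0 : ∀ x : X, ray x 0 = x)
    (hray_geo : ∀ x : X, ∀ s t : ℝ, 0 ≤ s → 0 ≤ t →
      dist (ray x s) (ray x t) = |s - t|)
    (hasymp : ∀ x y : X, ∃ C : ℝ, ∀ t : ℝ, 0 ≤ t →
      ∃ s : ℝ, 0 ≤ s ∧ dist (ray x t) (ray y s) ≤ C)
    (ρ : X → X → ℝ)
    (hρ : ∀ x y : X, ρ x y =
      sInf {e : ℝ | ∃ s t : ℝ, 0 ≤ s ∧ 0 ≤ t ∧ e = dist (ray x s) (ray y t)}) :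
    (∀ x y : X, 0 ≤ ρ x y) ∧ (∀ x : X, ρ x x = 0) ∧ (∀ x y : X, ρ x y = ρ y x) ∧
    (∀ x y z : X, ρ x z ≤ ρ x y + ρ y z) := by
  -- basic facts about the defining sets
  have hA_bdd : ∀ x y : X, BddBelow {e : ℝ | ∃ s t : ℝ, 0 ≤ s ∧ 0 ≤ t ∧ e = dist (ray x s) (ray y t)} := by
    intro x y
    exact ⟨0, by rintro e ⟨s, t, hs, ht, rfl⟩; exact dist_nonneg⟩
  have hA_ne : ∀ x y : X, ({e : ℝ | ∃ s t : ℝ, 0 ≤ s ∧ 0 ≤ t ∧ e = dist (ray x s) (ray y t)}).Nonempty := by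
    intro x y
    exact ⟨dist (ray x 0) (ray y 0), 0, 0, le_refl _, le_refl _, rfl⟩
  have hρ_le : ∀ x y : X, ∀ s t : ℝ, 0 ≤ s → 0 ≤ t → ρ x y ≤ dist (ray x s) (ray y t) := by
    intro x y s t hs ht
    rw [hρ]
    exact csInf_le (hA_bdd x y) ⟨s, t, hs, ht, rfl⟩
  have hρ_nonneg : ∀ x y : X, 0 ≤ ρ x y := by
    intro x y
    rw [hρ]
    apply le_csInf (hA_ne x y)
    rintro e ⟨s, t, hs, ht, rfl⟩; exact dist_nonneg
  -- midpoints on rays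
  have hraymid : ∀ x : X, ∀ a b : ℝ, 0 ≤ a → 0 ≤ b →
      dist (ray x a) (ray x ((a + b) / 2)) = dist (ray x a) (ray x b) / 2 ∧
      dist (ray x ((a + b) / 2)) (ray x b) = dist (ray x a) (ray x b) / 2 := by
    intro x a b ha hb
    have hm : (0:ℝ) ≤ (a + b) / 2 := by linarith
    rw [hray_geo x a ((a+b)/2) ha hm, hray_geo x ((a+b)/2) b hm hb, hray_geo x a b ha hb]
    constructor
    · rw [show a - (a + b) / 2 = (a - b) / 2 by ring, abs_div]; norm_num
    · rw [show (a + b) / 2 - b = (a - b) / 2 by ring, abs_div]; norm_num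
  -- Busemann convexity for two geodesic segments along the rays
  have hcomb : ∀ x y : X, ∀ t1 t2 s1 s2 : ℝ, 0 ≤ t1 → 0 ≤ t2 → 0 ≤ s1 → 0 ≤ s2 →
      dist (ray x ((t1 + t2) / 2)) (ray y ((s1 + s2) / 2)) ≤
        (dist (ray x t1) (ray y s1) + dist (ray x t2) (ray y s2)) / 2 := by
    intro x y t1 t2 s1 s2 ht1 ht2 hs1 hs2
    obtain ⟨m, hm1, hm2⟩ := hgeo (ray x t1) (ray y s2)
    obtain ⟨e1, e2⟩ := hraymid x t1 t2 ht1 ht2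
    obtain ⟨f1, f2⟩ := hraymid y s2 s1 hs2 hs1
    have h1 : dist (ray x ((t1 + t2) / 2)) m ≤ dist (ray x t2) (ray y s2) / 2 :=
      hconv (ray x t1) (ray x t2) (ray y s2) (ray x ((t1 + t2) / 2)) m e1 e2 hm1 hm2
    have hm1' : dist (ray y s2) m = dist (ray y s2) (ray x t1) / 2 := by
      rw [dist_comm (ray y s2) m, dist_comm (ray y s2) (ray x t1)]
      exact hm2
    have hm2' : dist m (ray x t1) = dist (ray y s2) (ray x t1) / 2 := by
      rw [dist_comm m (ray x t1), dist_comm (ray y s2) (ray x t1)]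
      exact hm1
    have h2 : dist (ray y ((s2 + s1) / 2)) m ≤ dist (ray y s1) (ray x t1) / 2 :=
      hconv (ray y s2) (ray y s1) (ray x t1) (ray y ((s2 + s1) / 2)) m f1 f2 hm1' hm2'
    have hcom : (s2 + s1) / 2 = (s1 + s2) / 2 := by ring
    rw [hcom] at h2
    calc dist (ray x ((t1 + t2) / 2)) (ray y ((s1 + s2) / 2))
        ≤ dist (ray x ((t1 + t2) / 2)) m + dist m (ray y ((s1 + s2) / 2)) := dist_triangle _ _ _
      _ ≤ dist (ray x t2) (ray y s2) / 2 + dist (ray y s1) (ray x t1) / 2 := by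
          rw [dist_comm m]
          exact add_le_add h1 h2
      _ = (dist (ray x t1) (ray y s1) + dist (ray x t2) (ray y s2)) / 2 := by
          rw [dist_comm (ray y s1) (ray x t1)]; ring
  -- distance from a point on one ray to the other ray
  set D : X → X → ℝ → ℝ :=
    fun x y t => sInf {e : ℝ | ∃ s : ℝ, 0 ≤ s ∧ e = dist (ray x t) (ray y s)} with hD
  have hDset_bdd : ∀ x y : X, ∀ t : ℝ,
      BddBelow {e : ℝ | ∃ s : ℝ, 0 ≤ s ∧ e = dist (ray x t) (ray y s)} :=
    fun x y t => ⟨0, by rintro e ⟨s, hs, rfl⟩; exact dist_nonneg⟩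
  have hDset_ne : ∀ x y : X, ∀ t : ℝ,
      ({e : ℝ | ∃ s : ℝ, 0 ≤ s ∧ e = dist (ray x t) (ray y s)}).Nonempty :=
    fun x y t => ⟨dist (ray x t) (ray y 0), 0, le_refl _, rfl⟩
  have hD_le : ∀ x y : X, ∀ t s : ℝ, 0 ≤ s → D x y t ≤ dist (ray x t) (ray y s) := by
    intro x y t s hs
    exact csInf_le (hDset_bdd x y t) ⟨s, hs, rfl⟩
  have hD_nonneg : ∀ x y : X, ∀ t : ℝ, 0 ≤ D x y t := by
    intro x y t
    apply le_csInf (hDset_ne x y t)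
    rintro e ⟨s, hs, rfl⟩; exact dist_nonneg
  have hρ_le_D : ∀ x y : X, ∀ t : ℝ, 0 ≤ t → ρ x y ≤ D x y t := by
    intro x y t ht
    apply le_csInf (hDset_ne x y t)
    rintro e ⟨s, hs, rfl⟩
    exact hρ_le x y t s ht hs
  have hD_exists : ∀ x y : X, ∀ t : ℝ, ∀ ε : ℝ, 0 < ε →
      ∃ s : ℝ, 0 ≤ s ∧ dist (ray x t) (ray y s) < D x y t + ε := by
    intro x y t ε hε
    have : D x y t < D x y t + ε := by linarith
    obtain ⟨e, ⟨s, hs, rfl⟩, he⟩ := exists_lt_of_csInf_lt (hDset_ne x y t) this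
    exact ⟨s, hs, he⟩
  -- D is bounded above (asymptoticity)
  have hD_bdd : ∀ x y : X, ∃ C : ℝ, ∀ t : ℝ, 0 ≤ t → D x y t ≤ C := by
    intro x y
    obtain ⟨C, hC⟩ := hasymp x y
    refine ⟨C, fun t ht => ?_⟩
    obtain ⟨s, hs, hds⟩ := hC t ht
    exact le_trans (hD_le x y t s hs) hds
  -- D is midpoint convex in t
  have hD_mid : ∀ x y : X, ∀ t1 t2 : ℝ, 0 ≤ t1 → 0 ≤ t2 →
      D x y ((t1 + t2) / 2) ≤ (D x y t1 + D x y t2) / 2 := by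
    intro x y t1 t2 ht1 ht2
    apply le_of_forall_pos_le_add
    intro ε hε
    obtain ⟨s1, hs1, hd1⟩ := hD_exists x y t1 ε hε
    obtain ⟨s2, hs2, hd2⟩ := hD_exists x y t2 ε hε
    have hmid : (0:ℝ) ≤ (s1 + s2) / 2 := by linarith
    calc D x y ((t1 + t2) / 2) ≤ dist (ray x ((t1 + t2) / 2)) (ray y ((s1 + s2) / 2)) :=
          hD_le x y _ _ hmid
      _ ≤ (dist (ray x t1) (ray y s1) + dist (ray x t2) (ray y s2)) / 2 :=
          hcomb x y t1 t2 s1 s2 ht1 ht2 hs1 hs2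
      _ ≤ (D x y t1 + D x y t2) / 2 + ε := by linarith
  -- D is nonincreasing
  have hD_mono : ∀ x y : X, ∀ t1 t2 : ℝ, 0 ≤ t1 → t1 ≤ t2 → D x y t2 ≤ D x y t1 := by
    intro x y
    obtain ⟨C, hC⟩ := hD_bdd x y
    exact midconv_mono (D x y) C hC (hD_mid x y)
  -- ρ is approximated by D at some parameter
  have hρ_approx : ∀ x y : X, ∀ ε : ℝ, 0 < ε → ∃ t : ℝ, 0 ≤ t ∧ D x y t < ρ x y + ε := by
    intro x y ε hε
    have h1 : ρ x y < ρ x y + ε := by linarith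
    rw [hρ] at h1
    obtain ⟨e, ⟨s, t, hs, ht, rfl⟩, he⟩ :=
      exists_lt_of_csInf_lt (hA_ne x y) h1
    rw [← hρ] at he
    exact ⟨s, hs, lt_of_le_of_lt (hD_le x y s t ht) he⟩
  refine ⟨hρ_nonneg, ?_, ?_, ?_⟩
  · -- diagonal
    intro x
    have h1 : ρ x x ≤ dist (ray x 0) (ray x 0) := hρ_le x x 0 0 (le_refl _) (le_refl _)
    simp at h1
    exact le_antisymm h1 (hρ_nonneg x x)
  · -- symmetry
    intro x y
    rw [hρ x y, hρ y x]
    congr 1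
    ext e
    constructor
    · rintro ⟨s, t, hs, ht, rfl⟩
      exact ⟨t, s, ht, hs, dist_comm _ _⟩
    · rintro ⟨s, t, hs, ht, rfl⟩
      exact ⟨t, s, ht, hs, dist_comm _ _⟩
  · -- triangle inequality
    intro x y z
    have key : ∀ ε : ℝ, 0 < ε → ρ x z ≤ ρ x y + ρ y z + 4 * ε := by
      intro ε hε
      obtain ⟨S0, hS0, hDS0⟩ := hρ_approx y z ε hε
      obtain ⟨T0, hT0, hDT0⟩ := hρ_approx x y ε hε
      set T := max T0 (S0 + dist x y + ρ x y + 2 * ε) with hT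
      have hT0' : T0 ≤ T := le_max_left _ _
      have hT1 : S0 + dist x y + ρ x y + 2 * ε ≤ T := le_max_right _ _
      have hTnn : 0 ≤ T := le_trans hT0 hT0'
      have hDT : D x y T ≤ ρ x y + ε := le_of_lt (lt_of_le_of_lt (hD_mono x y T0 T hT0 hT0') hDT0)
      obtain ⟨s, hs, hds⟩ := hD_exists x y T ε hε
      have hds' : dist (ray x T) (ray y s) < ρ x y + 2 * ε := by linarith
      -- show s ≥ S0
      have hxT : dist x (ray x T) = T := by
        have := hray_geo x 0 T (le_refl _) hTnn
        rw [hray0] at this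
        rw [this]
        rw [abs_of_nonpos (by linarith)]
        ring
      have hys : dist x (ray y s) ≤ dist x y + s := by
        have h2 := hray_geo y 0 s (le_refl _) hs
        rw [hray0] at h2
        have h3 : dist y (ray y s) = s := by
          rw [h2, abs_of_nonpos (by linarith)]; ring
        calc dist x (ray y s) ≤ dist x y + dist y (ray y s) := dist_triangle _ _ _
          _ = dist x y + s := by rw [h3]
      have hlow : T - (dist x y + s) ≤ dist (ray x T) (ray y s) := by
        have := dist_triangle x (ray y s) (ray x T)
        rw [dist_comm (ray y s) (ray x T)] at this
        linarith [hxT, hys, this]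
      have hsS0 : S0 ≤ s := by
        by_contra hcon
        push_neg at hcon
        have : T - (dist x y + s) < ρ x y + 2 * ε := lt_of_le_of_lt hlow hds'
        linarith
      have hDys : D y z s ≤ ρ y z + ε :=
        le_of_lt (lt_of_le_of_lt (hD_mono y z S0 s hS0 hsS0) hDS0)
      obtain ⟨u, hu, hdu⟩ := hD_exists y z s ε hε
      have hdu' : dist (ray y s) (ray z u) < ρ y z + 2 * ε := by linarith
      calc ρ x z ≤ dist (ray x T) (ray z u) := hρ_le x z T u hTnn hu
        _ ≤ dist (ray x T) (ray y s) + dist (ray y s) (ray z u) := dist_triangle _ _ _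
        _ ≤ ρ x y + ρ y z + 4 * ε := by linarith
    -- conclude
    by_contra hcon
    push_neg at hcon
    have hε : 0 < (ρ x z - (ρ x y + ρ y z)) / 5 := by linarith
    have := key _ hε
    linarith
end

section
/- Let X be a Busemann space and let c, d : [0,∞) → X be asymptotic geodesic rays with Busemann functions β_c, β_d. Then 0 ≤ β_c(d(0)) + β_d(c(0)) ≤ 2·ρ_ξ(c,d), where ρ_ξ(c,d) = inf_{s,t ≥ 0} d(c(s), d(t)). -/
open Filter

/-- A midpoint-convex function on `[0, ∞)` that is bounded above is bounded by its value
at `0`. -/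
lemma midconv_bdd_le_zero (ψ : ℝ → ℝ) (M : ℝ)
    (hb : ∀ u : ℝ, 0 ≤ u → ψ u ≤ M)
    (hmc : ∀ u v : ℝ, 0 ≤ u → 0 ≤ v → ψ ((u + v) / 2) ≤ (ψ u + ψ v) / 2)
    (s : ℝ) (hs : 0 ≤ s) : ψ s ≤ ψ 0 := by
  by_contra h
  push_neg at h
  have hδpos : 0 < ψ s - ψ 0 := by linarith
  have key : ∀ n : ℕ, ψ 0 + 2 ^ n * (ψ s - ψ 0) ≤ ψ (2 ^ n * s) := by
    intro n
    induction n with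
    | zero => simp
    | succ n ih =>
      have h1 : ψ ((0 + 2 ^ (n + 1) * s) / 2) ≤ (ψ 0 + ψ (2 ^ (n + 1) * s)) / 2 :=
        hmc 0 (2 ^ (n + 1) * s) le_rfl (by positivity)
      have h2 : (0 + 2 ^ (n + 1) * s) / 2 = 2 ^ n * s := by ring
      rw [h2] at h1
      have h3 : (2 : ℝ) ^ (n + 1) = 2 * 2 ^ n := by ring
      rw [h3] at h1 ⊢
      linarith
  obtain ⟨n, hn⟩ := pow_unbounded_of_one_lt ((M - ψ 0) / (ψ s - ψ 0)) (one_lt_two (α := ℝ))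
  have h4 := key n
  have h5 := hb (2 ^ n * s) (by positivity)
  rw [div_lt_iff₀ hδpos] at hn
  linarith

/-- For asymptotic rays `c`, `d` in a Busemann space with Busemann functions `β_c`, `β_d`,
one has `0 ≤ β_c(d 0) + β_d(c 0) ≤ 2·ρ_ξ(c,d)`, where `ρ_ξ(c,d)` is the infimal distance
between the rays. -/
theorem stmt5 {X : Type*} [MetricSpace X]
    (hgeo : ∀ x y : X, ∃ m : X, dist x m = dist x y / 2 ∧ dist m y = dist x y / 2)
    (hconv : ∀ x y z m n : X,
      dist x m = dist x y / 2 → dist m y = dist x y / 2 →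
      dist x n = dist x z / 2 → dist n z = dist x z / 2 →
      dist m n ≤ dist y z / 2)
    (c d : ℝ → X)
    (hc : ∀ s t : ℝ, 0 ≤ s → 0 ≤ t → dist (c s) (c t) = |s - t|)
    (hd : ∀ s t : ℝ, 0 ≤ s → 0 ≤ t → dist (d s) (d t) = |s - t|)
    (hasymp : ∃ C : ℝ, ∀ t : ℝ, 0 ≤ t →
      (∃ s : ℝ, 0 ≤ s ∧ dist (c t) (d s) ≤ C) ∧ (∃ s : ℝ, 0 ≤ s ∧ dist (d t) (c s) ≤ C))
    (βcd βdc ρ : ℝ)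
    (hβcd : Tendsto (fun t : ℝ => dist (d 0) (c t) - t) atTop (nhds βcd))
    (hβdc : Tendsto (fun t : ℝ => dist (c 0) (d t) - t) atTop (nhds βdc))
    (hρ : ρ = sInf {e : ℝ | ∃ s t : ℝ, 0 ≤ s ∧ 0 ≤ t ∧ e = dist (c s) (d t)}) :
    0 ≤ βcd + βdc ∧ βcd + βdc ≤ 2 * ρ := by
  obtain ⟨C, hC⟩ := hasymp
  -- distance along rays from the base point
  have hc0 : ∀ x : ℝ, 0 ≤ x → dist (c 0) (c x) = x := by
    intro x hx
    rw [hc 0 x le_rfl hx, zero_sub, abs_neg, abs_of_nonneg hx]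
  have hd0 : ∀ x : ℝ, 0 ≤ x → dist (d 0) (d x) = x := by
    intro x hx
    rw [hd 0 x le_rfl hx, zero_sub, abs_neg, abs_of_nonneg hx]
  -- the Busemann quantities are limits of nonincreasing functions, hence lower bounds
  have hfc : ∀ t : ℝ, 0 ≤ t → βcd ≤ dist (d 0) (c t) - t := by
    intro t ht
    refine le_of_tendsto hβcd ?_
    filter_upwards [eventually_ge_atTop t, eventually_ge_atTop (0 : ℝ)] with t' ht' ht0
    have h1 : dist (d 0) (c t') ≤ dist (d 0) (c t) + dist (c t) (c t') := dist_triangle _ _ _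
    have h2 : dist (c t) (c t') = |t - t'| := hc t t' ht ht0
    have h3 : |t - t'| = t' - t := by rw [abs_sub_comm, abs_of_nonneg (by linarith)]
    linarith
  have hfd : ∀ t : ℝ, 0 ≤ t → βdc ≤ dist (c 0) (d t) - t := by
    intro t ht
    refine le_of_tendsto hβdc ?_
    filter_upwards [eventually_ge_atTop t, eventually_ge_atTop (0 : ℝ)] with t' ht' ht0
    have h1 : dist (c 0) (d t') ≤ dist (c 0) (d t) + dist (d t) (d t') := dist_triangle _ _ _
    have h2 : dist (d t) (d t') = |t - t'| := hd t t' ht ht0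
    have h3 : |t - t'| = t' - t := by rw [abs_sub_comm, abs_of_nonneg (by linarith)]
    linarith
  -- key lemma: dist (d s) (c (s + t)) ≤ dist (d 0) (c t)
  have keyA : ∀ t s : ℝ, 0 ≤ t → 0 ≤ s → dist (d s) (c (s + t)) ≤ dist (d 0) (c t) := by
    intro t s ht hs
    have main := midconv_bdd_le_zero (fun u => dist (d u) (c (u + t)))
      (2 * C + dist (c 0) (d 0) + t) ?_ ?_ s hs
    · simpa using main
    · -- boundedness
      intro u hu
      obtain ⟨s', hs', hds'⟩ := (hC u hu).2
      have h1 : dist (d u) (c (u + t)) ≤ dist (d u) (c s') + dist (c s') (c (u + t)) :=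
        dist_triangle _ _ _
      have h2 : dist (c s') (c (u + t)) = |s' - (u + t)| := hc s' (u + t) hs' (by linarith)
      -- bound |s' - (u + t)|
      have e1 : dist (c 0) (c s') = s' := hc0 s' hs'
      have e2 : dist (d 0) (d u) = u := hd0 u hu
      have t1 : dist (c 0) (c s') ≤ dist (c 0) (d 0) + dist (d 0) (d u) + dist (d u) (c s') := by
        have := dist_triangle (c 0) (d u) (c s')
        have := dist_triangle (c 0) (d 0) (d u)
        linarith
      have t2 : dist (d 0) (d u) ≤ dist (d 0) (c 0) + dist (c 0) (c s') + dist (c s') (d u) := by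
        have := dist_triangle (d 0) (c s') (d u)
        have := dist_triangle (d 0) (c 0) (c s')
        linarith
      rw [e1] at t1 t2
      rw [e2] at t1 t2
      rw [dist_comm (d 0) (c 0)] at t2
      rw [dist_comm (c s') (d u)] at t2
      have habs : |s' - (u + t)| ≤ dist (c 0) (d 0) + C + t := by
        rw [abs_le]
        constructor <;> nlinarith [dist_nonneg (x := c 0) (y := d 0)]
      linarith
    · -- midpoint convexity
      intro u v hu hv
      set w := (u + v) / 2 with hw
      have hw0 : 0 ≤ w := by positivity
      obtain ⟨p, hp1, hp2⟩ := hgeo (d u) (c (v + t))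
      -- d w is a midpoint of d u and d v
      have m1a : dist (d u) (d w) = dist (d u) (d v) / 2 := by
        rw [hd u w hu hw0, hd u v hu hv]
        rw [show u - w = (u - v) / 2 by rw [hw]; ring, abs_div]
        simp [abs_of_nonneg]
      have m1b : dist (d w) (d v) = dist (d u) (d v) / 2 := by
        rw [hd w v hw0 hv, hd u v hu hv]
        rw [show w - v = (u - v) / 2 by rw [hw]; ring, abs_div]
        simp [abs_of_nonneg]
      -- c (w + t) is a midpoint of c (v + t) and c (u + t)
      have m2a : dist (c (v + t)) (c (w + t)) = dist (c (v + t)) (c (u + t)) / 2 := by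
        rw [hc (v + t) (w + t) (by linarith) (by linarith), hc (v + t) (u + t) (by linarith) (by linarith)]
        rw [show v + t - (w + t) = (v - u) / 2 by rw [hw]; ring,
          show v + t - (u + t) = v - u by ring, abs_div]
        simp [abs_of_nonneg]
      have m2b : dist (c (w + t)) (c (u + t)) = dist (c (v + t)) (c (u + t)) / 2 := by
        rw [hc (w + t) (u + t) (by linarith) (by linarith), hc (v + t) (u + t) (by linarith) (by linarith)]
        rw [show w + t - (u + t) = (v - u) / 2 by rw [hw]; ring,
          show v + t - (u + t) = v - u by ring, abs_div]
        simp [abs_of_nonneg]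
      -- first application of convexity, apex d u
      have conv1 : dist (d w) p ≤ dist (d v) (c (v + t)) / 2 :=
        hconv (d u) (d v) (c (v + t)) (d w) p m1a m1b hp1 hp2
      -- second application, apex c (v + t)
      have hp1' : dist (c (v + t)) p = dist (c (v + t)) (d u) / 2 := by
        rw [dist_comm (c (v + t)) p, dist_comm (c (v + t)) (d u)]
        exact hp2
      have hp2' : dist p (d u) = dist (c (v + t)) (d u) / 2 := by
        rw [dist_comm p (d u), dist_comm (c (v + t)) (d u)]
        exact hp1
      have conv2 : dist (c (w + t)) p ≤ dist (c (u + t)) (d u) / 2 :=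
        hconv (c (v + t)) (c (u + t)) (d u) (c (w + t)) p m2a m2b hp1' hp2'
      have tri : dist (d w) (c (w + t)) ≤ dist (d w) p + dist p (c (w + t)) :=
        dist_triangle _ _ _
      rw [dist_comm p (c (w + t))] at tri
      rw [dist_comm (c (u + t)) (d u)] at conv2
      linarith
  -- lower bound: 0 ≤ βcd + βdc
  have h1 : ∀ t : ℝ, 0 ≤ t → t - dist (d 0) (c t) ≤ βdc := by
    intro t ht
    refine ge_of_tendsto hβdc ?_
    filter_upwards [eventually_ge_atTop (0 : ℝ)] with s hs
    have h2 := keyA t s ht hs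
    have h3 : dist (c 0) (c (s + t)) = s + t := hc0 (s + t) (by linarith)
    have h4 : dist (c 0) (c (s + t)) ≤ dist (c 0) (d s) + dist (d s) (c (s + t)) :=
      dist_triangle _ _ _
    linarith
  have hlow : -βdc ≤ βcd := by
    refine ge_of_tendsto hβcd ?_
    filter_upwards [eventually_ge_atTop (0 : ℝ)] with t ht
    have := h1 t ht
    linarith
  -- upper bound: βcd + βdc ≤ 2 ρ
  have hub : (βcd + βdc) / 2 ≤ ρ := by
    rw [hρ]
    refine le_csInf ⟨dist (c 0) (d 0), 0, 0, le_rfl, le_rfl, rfl⟩ ?_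
    rintro e ⟨s, t, hs, ht, rfl⟩
    have b1 : βcd ≤ dist (d 0) (c s) - s := hfc s hs
    have b2 : βdc ≤ dist (c 0) (d t) - t := hfd t ht
    have t1 : dist (d 0) (c s) ≤ dist (d 0) (d t) + dist (d t) (c s) := dist_triangle _ _ _
    have t2 : dist (c 0) (d t) ≤ dist (c 0) (c s) + dist (c s) (d t) := dist_triangle _ _ _
    rw [hd0 t ht] at t1
    rw [hc0 s hs] at t2
    rw [dist_comm (d t) (c s)] at t1
    linarith
  exact ⟨by linarith, by linarith⟩
end

section
/- Let X be a proper metric space, x₀ ∈ X, y ∈ X with y ≠ x₀. Define the spherical shadow Shadow_y(x₁, ρ) = { z ∈ X : d(y,z) = d(y,x₁) + ρ and x₁ lies on some geodesic segment [y,z] } ∩ S(x₁, ρ). Then for any ρ, ε > 0 there exists δ > 0 such that for every point x₁ with d(x₀,x₁) < δ and d(y,x₁) = d(y,x₀), one has Shadow_y(x₁, ρ) ⊆ N_ε(Shadow_y(x₀, ρ)), where N_ε denotes the open ε-neighbourhood. -/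
/-- Semicontinuity of spherical shadows: in a proper geodesic metric space, for points
`x₁` close to `x₀` on the same sphere around `y`, the spherical shadow of `x₁` of radius
`ρ` relative to `y` lies in the `ε`-neighbourhood of that of `x₀`. -/
theorem stmt7 {X : Type*} [MetricSpace X] [ProperSpace X]
    (hgeo : ∀ a b : X, ∀ r : ℝ, 0 ≤ r → r ≤ dist a b →
      ∃ z : X, dist a z = r ∧ dist a z + dist z b = dist a b)
    (x₀ y : X) (hxy : y ≠ x₀)
    (Shadow : X → X → ℝ → Set X)
    (hShadow : ∀ (y' x₁ : X) (ρ : ℝ), Shadow y' x₁ ρ =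
      {z : X | dist x₁ z = ρ ∧ dist y' x₁ + dist x₁ z = dist y' z}) :
    ∀ ρ ε : ℝ, 0 < ρ → 0 < ε → ∃ δ > 0, ∀ x₁ : X,
      dist x₀ x₁ < δ → dist y x₁ = dist y x₀ →
      Shadow y x₁ ρ ⊆ {w : X | ∃ z ∈ Shadow y x₀ ρ, dist w z < ε} := by
  intro ρ ε hρ hε
  by_contra hcon
  push_neg at hcon
  have key : ∀ n : ℕ, ∃ x₁ : X, dist x₀ x₁ < 1 / (n + 1) ∧ dist y x₁ = dist y x₀ ∧
      ∃ z : X, (dist x₁ z = ρ ∧ dist y x₁ + dist x₁ z = dist y z) ∧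
        ∀ z' : X, (dist x₀ z' = ρ ∧ dist y x₀ + dist x₀ z' = dist y z') → ε ≤ dist z z' := by
    intro n
    obtain ⟨x₁, h1, h2, h3⟩ := hcon (1 / (n + 1)) (by positivity)
    refine ⟨x₁, h1, h2, ?_⟩
    rw [Set.not_subset] at h3
    obtain ⟨z, hz1, hz2⟩ := h3
    rw [hShadow] at hz1
    refine ⟨z, hz1, fun z' hz' => ?_⟩
    by_contra hlt
    push_neg at hlt
    exact hz2 ⟨z', by rw [hShadow]; exact hz', hlt⟩
  choose u hu1 hu2 v hv1 hv2 using key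
  have hucont : Filter.Tendsto u Filter.atTop (nhds x₀) := by
    rw [tendsto_iff_dist_tendsto_zero]
    apply squeeze_zero (fun n => dist_nonneg) (fun n => ?_)
      tendsto_one_div_add_atTop_nhds_zero_nat
    rw [dist_comm]
    exact (hu1 n).le
  have hsub : ∀ n, v n ∈ Metric.closedBall x₀ (1 + ρ) := by
    intro n
    rw [Metric.mem_closedBall]
    calc dist (v n) x₀ ≤ dist (v n) (u n) + dist (u n) x₀ := dist_triangle _ _ _
      _ = ρ + dist x₀ (u n) := by rw [dist_comm (v n), (hv1 n).1, dist_comm]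
      _ ≤ ρ + 1 / (n + 1) := by linarith [(hu1 n).le]
      _ ≤ 1 + ρ := by
          have : (1 : ℝ) / (n + 1) ≤ 1 := by
            rw [div_le_one (by positivity)]
            simp
          linarith
  obtain ⟨z, hzmem, φ, hφ, hlim⟩ :=
    (isCompact_closedBall x₀ (1 + ρ)).tendsto_subseq hsub
  have huφ : Filter.Tendsto (u ∘ φ) Filter.atTop (nhds x₀) :=
    hucont.comp hφ.tendsto_atTop
  have hd1 : dist x₀ z = ρ := by
    have h1 : Filter.Tendsto (fun n => dist (u (φ n)) (v (φ n))) Filter.atTop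
        (nhds (dist x₀ z)) := huφ.dist hlim
    have h2 : (fun n => dist (u (φ n)) (v (φ n))) = fun _ => ρ := by
      funext n; exact (hv1 (φ n)).1
    rw [h2] at h1
    exact (tendsto_nhds_unique tendsto_const_nhds h1).symm
  have hd2 : dist y x₀ + dist x₀ z = dist y z := by
    have h1 : Filter.Tendsto (fun n => dist y (v (φ n))) Filter.atTop
        (nhds (dist y z)) := tendsto_const_nhds.dist hlim
    have h2 : (fun n => dist y (v (φ n))) = fun _ => dist y x₀ + ρ := by
      funext n
      rw [← (hv1 (φ n)).2, hu2 (φ n), (hv1 (φ n)).1]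
    rw [h2] at h1
    have := tendsto_nhds_unique tendsto_const_nhds h1
    rw [hd1, this]
  have hsep : ∀ n, ε ≤ dist (v (φ n)) z := fun n => hv2 (φ n) z ⟨hd1, hd2⟩
  have hdz : Filter.Tendsto (fun n => dist (v (φ n)) z) Filter.atTop (nhds 0) := by
    rw [← tendsto_iff_dist_tendsto_zero]; exact hlim
  have := ge_of_tendsto hdz (Filter.Eventually.of_forall hsep)
  linarith
end

section
/- Let X be a metric tree (a tree with all edges of the same length 1/n for a fixed n ∈ ℕ, viewed as an ℝ-tree with at least one edge) and fix 0 < α < β < 1/(2n). Let A_α (resp. A_β) be the set of points at distance α (resp. β) from the nearest vertex along an edge. Define φ : A_α ∪ A_β → A_α ∪ A_β by swapping, on each edge [a,b], the point at distance α from a with the point at distance β from a (and similarly from b). Then φ is a bijection of A = A_α ∪ A_β that is an isometry of A with respect to the grasshopper metric G_d, i.e., G_d(φ(p), φ(q)) = G_d(p,q) for all p, q ∈ A. -/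
open scoped Classical

private lemma term_ne' (n : ℕ) (hn : 0 < n) (d : ℕ) (s : ℝ) (m : ℤ)
    (h1 : (m:ℝ) < (n:ℝ) * s) (h2 : (n:ℝ) * s < m + 1) : ¬ ((d:ℝ)/n + s = 1) := by
  intro h
  have hn' : (0:ℝ) < n := by exact_mod_cast hn
  have he : (n:ℝ) * s = ((n:ℤ) - (d:ℤ) : ℤ) := by
    push_cast
    field_simp at h
    linarith
  rw [he] at h1 h2
  have h1' : m < (n:ℤ) - d := by exact_mod_cast h1
  have h2' : (n:ℤ) - d < m + 1 := by exact_mod_cast h2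
  omega

private lemma mixed_ne (n : ℕ) (hn : 0 < n) (a b : ℝ) (ha0 : 0 < a) (hb0 : 0 < b)
    (ha : a < 1/(2*n)) (hb : b < 1/(2*n)) (hab : a ≠ b)
    (d11 d12 d21 d22 : ℕ) :
    min (min (a + (d11:ℝ)/n + b) (a + (d12:ℝ)/n + (1/n - b)))
        (min ((1/n - a) + (d21:ℝ)/n + b) ((1/n - a) + (d22:ℝ)/n + (1/n - b))) ≠ 1 := by
  have hn' : (0:ℝ) < n := by exact_mod_cast hn
  have h2a : (n:ℝ) * a < 1/2 := by
    have h := (lt_div_iff₀ (by positivity : (0:ℝ) < 2*n)).mp ha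
    nlinarith
  have h2b : (n:ℝ) * b < 1/2 := by
    have h := (lt_div_iff₀ (by positivity : (0:ℝ) < 2*n)).mp hb
    nlinarith
  have hna : (0:ℝ) < n * a := by positivity
  have hnb : (0:ℝ) < n * b := by positivity
  have e1 : (n:ℝ) * (a + b) = n*a + n*b := by ring
  have e2 : (n:ℝ) * (a + (1/n - b)) = 1 + n*a - n*b := by field_simp; ring
  have e3 : (n:ℝ) * ((1/n - a) + b) = 1 - n*a + n*b := by field_simp
  have e4 : (n:ℝ) * ((1/n - a) + (1/n - b)) = 2 - n*a - n*b := by field_simp; ring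
  have h1 : a + (d11:ℝ)/n + b ≠ 1 := fun h =>
    term_ne' n hn d11 (a + b) 0 (by rw [e1]; push_cast; linarith)
      (by rw [e1]; push_cast; linarith) (by linarith)
  have h4 : (1/n - a) + (d22:ℝ)/n + (1/n - b) ≠ 1 := fun h =>
    term_ne' n hn d22 ((1/n - a) + (1/n - b)) 1 (by rw [e4]; push_cast; linarith)
      (by rw [e4]; push_cast; linarith) (by linarith)
  have h2 : a + (d12:ℝ)/n + (1/n - b) ≠ 1 := by
    intro h
    rcases lt_or_gt_of_ne hab with hlt | hgt
    · have hab' : (n:ℝ)*a < n*b := by nlinarith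
      exact term_ne' n hn d12 (a + (1/n - b)) 0
        (by rw [e2]; push_cast; linarith) (by rw [e2]; push_cast; linarith) (by linarith)
    · have hab' : (n:ℝ)*b < n*a := by nlinarith
      exact term_ne' n hn d12 (a + (1/n - b)) 1
        (by rw [e2]; push_cast; linarith) (by rw [e2]; push_cast; linarith) (by linarith)
  have h3 : (1/n - a) + (d21:ℝ)/n + b ≠ 1 := by
    intro h
    rcases lt_or_gt_of_ne hab with hlt | hgt
    · have hab' : (n:ℝ)*a < n*b := by nlinarith
      exact term_ne' n hn d21 ((1/n - a) + b) 1
        (by rw [e3]; push_cast; linarith) (by rw [e3]; push_cast; linarith) (by linarith)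
    · have hab' : (n:ℝ)*b < n*a := by nlinarith
      exact term_ne' n hn d21 ((1/n - a) + b) 0
        (by rw [e3]; push_cast; linarith) (by rw [e3]; push_cast; linarith) (by linarith)
  rcases min_choice (min (a + (d11:ℝ)/n + b) (a + (d12:ℝ)/n + (1/n - b)))
      (min ((1/n - a) + (d21:ℝ)/n + b) ((1/n - a) + (d22:ℝ)/n + (1/n - b))) with h | h
  · rw [h]
    rcases min_choice (a + (d11:ℝ)/n + b) (a + (d12:ℝ)/n + (1/n - b)) with h' | h' <;>
      rw [h'] <;> assumption
  · rw [h]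
    rcases min_choice ((1/n - a) + (d21:ℝ)/n + b) ((1/n - a) + (d22:ℝ)/n + (1/n - b)) with h' | h' <;>
      rw [h'] <;> assumption

private lemma key4 (n : ℕ) (hn : 0 < n) (a : ℝ) (ha0 : 0 < a) (ha : a < 1/(2*n))
    (d11 d12 d21 d22 : ℕ) :
    (min (min (a + (d11:ℝ)/n + a) (a + (d12:ℝ)/n + (1/n - a)))
        (min ((1/n - a) + (d21:ℝ)/n + a) ((1/n - a) + (d22:ℝ)/n + (1/n - a))) = 1)
    ↔ (n ≤ d11 ∧ n ≤ d22 + 1 ∧ n ≤ d12 + 1 ∧ n ≤ d21 + 1 ∧ (d12 + 1 = n ∨ d21 + 1 = n)) := by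
  have hn' : (0:ℝ) < n := by exact_mod_cast hn
  have h2a : 2 * a < 1/(n:ℝ) := by
    have h := (lt_div_iff₀ (by positivity : (0:ℝ) < 2*n)).mp ha
    rw [lt_div_iff₀ hn']; nlinarith
  have hun : (0:ℝ) < 1/(n:ℝ) := by positivity
  set t1 := a + (d11:ℝ)/n + a with ht1
  set t2 := a + (d12:ℝ)/n + (1/n - a) with ht2
  set t3 := (1/n - a) + (d21:ℝ)/n + a with ht3
  set t4 := (1/n - a) + (d22:ℝ)/n + (1/n - a) with ht4
  have et1 : t1 = (d11:ℝ)/n + 2*a := by rw [ht1]; ring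
  have et2 : t2 = ((d12:ℝ) + 1)/n := by rw [ht2]; ring
  have et3 : t3 = ((d21:ℝ) + 1)/n := by rw [ht3]; ring
  have et4 : t4 = ((d22:ℝ) + 2)/n - 2*a := by rw [ht4]; ring
  have hnn : ((n:ℝ))/n = 1 := div_self hn'.ne'
  have hn1 : ((n:ℝ) + 1)/n = 1 + 1/n := by field_simp
  have hn1' : ((n:ℝ) - 1)/n = 1 - 1/n := by field_simp
  constructor
  · intro h
    have hm1 : 1 ≤ t1 := by
      rw [← h]; exact le_trans (min_le_left _ _) (min_le_left _ _)
    have hm2 : 1 ≤ t2 := by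
      rw [← h]; exact le_trans (min_le_left _ _) (min_le_right _ _)
    have hm3 : 1 ≤ t3 := by
      rw [← h]; exact le_trans (min_le_right _ _) (min_le_left _ _)
    have hm4 : 1 ≤ t4 := by
      rw [← h]; exact le_trans (min_le_right _ _) (min_le_right _ _)
    have hd11 : n ≤ d11 := by
      by_contra hc
      push_neg at hc
      have hcc : (d11:ℝ) + 1 ≤ n := by exact_mod_cast hc
      have hdiv : (d11:ℝ)/n ≤ ((n:ℝ) - 1)/n := by gcongr; linarith
      rw [hn1'] at hdiv
      rw [et1] at hm1
      linarith
    have hd22 : n ≤ d22 + 1 := by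
      by_contra hc
      push_neg at hc
      have hcc : (d22:ℝ) + 2 ≤ (n:ℝ) := by exact_mod_cast hc
      have hdiv : ((d22:ℝ) + 2)/n ≤ ((n:ℝ))/n := by gcongr
      rw [hnn] at hdiv
      rw [et4] at hm4
      linarith
    have hd12 : n ≤ d12 + 1 := by
      by_contra hc
      push_neg at hc
      have hcc : (d12:ℝ) + 1 + 1 ≤ (n:ℝ) := by exact_mod_cast hc
      have hdiv : ((d12:ℝ) + 1)/n ≤ ((n:ℝ) - 1)/n := by gcongr; linarith
      rw [hn1'] at hdiv
      rw [et2] at hm2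
      linarith
    have hd21 : n ≤ d21 + 1 := by
      by_contra hc
      push_neg at hc
      have hcc : (d21:ℝ) + 1 + 1 ≤ (n:ℝ) := by exact_mod_cast hc
      have hdiv : ((d21:ℝ) + 1)/n ≤ ((n:ℝ) - 1)/n := by gcongr; linarith
      rw [hn1'] at hdiv
      rw [et3] at hm3
      linarith
    refine ⟨hd11, hd22, hd12, hd21, ?_⟩
    have ht1gt : 1 < t1 := by
      have hcc : (n:ℝ) ≤ d11 := by exact_mod_cast hd11
      have hdiv : ((n:ℝ))/n ≤ (d11:ℝ)/n := by gcongr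
      rw [hnn] at hdiv
      rw [et1]
      linarith
    have ht4gt : 1 < t4 := by
      have hcc : (n:ℝ) + 1 ≤ (d22:ℝ) + 2 := by
        have : (n:ℝ) ≤ (d22:ℝ) + 1 := by exact_mod_cast hd22
        linarith
      have hdiv : ((n:ℝ) + 1)/n ≤ ((d22:ℝ) + 2)/n := by gcongr
      rw [hn1] at hdiv
      rw [et4]
      linarith
    rcases min_choice (min t1 t2) (min t3 t4) with hmin | hmin <;> rw [hmin] at h
    · rcases min_choice t1 t2 with hm | hm <;> rw [hm] at h
      · exact absurd h ht1gt.ne'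
      · left
        rw [et2, div_eq_one_iff_eq hn'.ne'] at h
        exact_mod_cast h
    · rcases min_choice t3 t4 with hm | hm <;> rw [hm] at h
      · right
        rw [et3, div_eq_one_iff_eq hn'.ne'] at h
        exact_mod_cast h
      · exact absurd h ht4gt.ne'
  · rintro ⟨h11, h22, h12, h21, h⟩
    have hm1 : 1 ≤ t1 := by
      have hcc : (n:ℝ) ≤ d11 := by exact_mod_cast h11
      have hdiv : ((n:ℝ))/n ≤ (d11:ℝ)/n := by gcongr
      rw [hnn] at hdiv; rw [et1]; linarith
    have hm2 : 1 ≤ t2 := by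
      have hcc : (n:ℝ) ≤ (d12:ℝ) + 1 := by exact_mod_cast h12
      have hdiv : ((n:ℝ))/n ≤ ((d12:ℝ)+1)/n := by gcongr
      rw [hnn] at hdiv; rw [et2]; linarith
    have hm3 : 1 ≤ t3 := by
      have hcc : (n:ℝ) ≤ (d21:ℝ) + 1 := by exact_mod_cast h21
      have hdiv : ((n:ℝ))/n ≤ ((d21:ℝ)+1)/n := by gcongr
      rw [hnn] at hdiv; rw [et3]; linarith
    have hm4 : 1 ≤ t4 := by
      have hcc : (n:ℝ) + 1 ≤ (d22:ℝ) + 2 := by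
        have : (n:ℝ) ≤ (d22:ℝ) + 1 := by exact_mod_cast h22
        linarith
      have hdiv : ((n:ℝ)+1)/n ≤ ((d22:ℝ)+2)/n := by gcongr
      rw [hn1] at hdiv; rw [et4]; linarith
    have hle : min (min t1 t2) (min t3 t4) ≤ 1 := by
      rcases h with h | h
      · have : t2 = 1 := by
          rw [et2, div_eq_one_iff_eq hn'.ne']
          exact_mod_cast h
        calc min (min t1 t2) (min t3 t4) ≤ min t1 t2 := min_le_left _ _
          _ ≤ t2 := min_le_right _ _
          _ = 1 := this
      · have : t3 = 1 := by
          rw [et3, div_eq_one_iff_eq hn'.ne']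
          exact_mod_cast h
        calc min (min t1 t2) (min t3 t4) ≤ min t3 t4 := min_le_right _ _
          _ ≤ t3 := min_le_left _ _
          _ = 1 := this
    have hge : 1 ≤ min (min t1 t2) (min t3 t4) :=
      le_min (le_min hm1 hm2) (le_min hm3 hm4)
    linarith

/-- Grasshopper isometry of a metric tree with all edges of length `1/n`.  The tree is a
combinatorial tree `G` on vertices `V`; a point of `A = A_α ∪ A_β` is encoded as an
oriented edge `(a,b)` together with a Boolean choosing the offset `α` or `β` from the
endpoint `a`.  `distP` is the induced path metric between such points, `Gd` the
grasshopper distance (minimal number of unit jumps, `∞` if none).  The map `φ` swapping,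
on each edge and from each endpoint, the point at distance `α` with the point at distance
`β` is a bijection of `A` and an isometry for the grasshopper metric. -/
theorem stmt8 {V : Type*} [DecidableEq V] (G : SimpleGraph V) (hG : G.IsTree)
    (hedge : ∃ a b : V, G.Adj a b)
    (n : ℕ) (hn : 0 < n) (α β : ℝ)
    (hα : 0 < α) (hαβ : α < β) (hβ : β < 1 / (2 * n))
    (off : Bool → ℝ) (hofft : off true = α) (hofff : off false = β)
    (distP : ({e : V × V // G.Adj e.1 e.2} × Bool) →
      ({e : V × V // G.Adj e.1 e.2} × Bool) → ℝ)
    (hdistP : ∀ p q : {e : V × V // G.Adj e.1 e.2} × Bool, distP p q =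
      if p.1.val = q.1.val then |off p.2 - off q.2|
      else if p.1.val.1 = q.1.val.2 ∧ p.1.val.2 = q.1.val.1 then
        |off p.2 - (1 / n - off q.2)|
      else
        min (min (off p.2 + (G.dist p.1.val.1 q.1.val.1 : ℝ) / n + off q.2)
                 (off p.2 + (G.dist p.1.val.1 q.1.val.2 : ℝ) / n + (1 / n - off q.2)))
            (min ((1 / n - off p.2) + (G.dist p.1.val.2 q.1.val.1 : ℝ) / n + off q.2)
                 ((1 / n - off p.2) + (G.dist p.1.val.2 q.1.val.2 : ℝ) / n
                   + (1 / n - off q.2))))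
    (Gd : ({e : V × V // G.Adj e.1 e.2} × Bool) →
      ({e : V × V // G.Adj e.1 e.2} × Bool) → ℕ∞)
    (hGd : ∀ p q : {e : V × V // G.Adj e.1 e.2} × Bool, Gd p q =
      sInf {m : ℕ∞ | ∃ k : ℕ, m = (k : ℕ∞) ∧
        ∃ j : ℕ → ({e : V × V // G.Adj e.1 e.2} × Bool),
          j 0 = p ∧ j k = q ∧ ∀ i < k, distP (j i) (j (i + 1)) = 1})
    (φ : ({e : V × V // G.Adj e.1 e.2} × Bool) → ({e : V × V // G.Adj e.1 e.2} × Bool))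
    (hφ : ∀ p, φ p = (p.1, !p.2)) :
    Function.Bijective φ ∧ ∀ p q, Gd (φ p) (φ q) = Gd p q := by
  have hn' : (0:ℝ) < n := by exact_mod_cast hn
  have hinv : Function.Involutive φ := by
    intro p; rw [hφ, hφ]; simp
  have hα2 : α < 1 / (2 * (n:ℝ)) := lt_trans hαβ hβ
  -- abs values of offsets are < 1
  have hoffpos : ∀ b, 0 < off b := by
    intro b; cases b <;> simp [hofft, hofff] <;> linarith
  have hoffsmall : ∀ b, off b < 1 / (2 * (n:ℝ)) := by
    intro b
    cases b
    · rw [hofff]; exact hβ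
    · rw [hofft]; exact hα2
  have hhalf : 1 / (2 * (n:ℝ)) ≤ 1 / 2 := by
    have : (2:ℝ) ≤ 2 * n := by
      have : (1:ℝ) ≤ n := by exact_mod_cast hn
      linarith
    gcongr
  have hsum : 1 / (2 * (n:ℝ)) + 1 / (2 * (n:ℝ)) = 1 / (n:ℝ) := by
    rw [← add_div, mul_comm, ← div_div, div_right_comm]
    norm_num
  have hunle : 1 / (n:ℝ) ≤ 1 := by
    rw [div_le_one hn']
    have h1 : (1:ℕ) ≤ n := hn
    exact_mod_cast h1
  -- key step-equivalence
  have key : ∀ p q, distP (φ p) (φ q) = 1 ↔ distP p q = 1 := by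
    intro p q
    rw [hφ, hφ, hdistP, hdistP]
    simp only
    split_ifs with h1 h2
    · constructor <;> intro h <;> exfalso
      · have := hoffpos (!p.2); have := hoffpos (!q.2)
        have := hoffsmall (!p.2); have := hoffsmall (!q.2)
        rcases abs_cases (off (!p.2) - off (!q.2)) with ⟨he, _⟩ | ⟨he, _⟩ <;>
          rw [he] at h <;> linarith
      · have := hoffpos p.2; have := hoffpos q.2
        have := hoffsmall p.2; have := hoffsmall q.2
        rcases abs_cases (off p.2 - off q.2) with ⟨he, _⟩ | ⟨he, _⟩ <;>
          rw [he] at h <;> linarith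
    · constructor <;> intro h <;> exfalso
      · have := hoffpos (!p.2); have := hoffpos (!q.2)
        have := hoffsmall (!p.2); have := hoffsmall (!q.2)
        rcases abs_cases (off (!p.2) - (1/(n:ℝ) - off (!q.2))) with ⟨he, _⟩ | ⟨he, _⟩ <;>
          rw [he] at h <;> linarith
      · have := hoffpos p.2; have := hoffpos q.2
        have := hoffsmall p.2; have := hoffsmall q.2
        rcases abs_cases (off p.2 - (1/(n:ℝ) - off q.2)) with ⟨he, _⟩ | ⟨he, _⟩ <;>
          rw [he] at h <;> linarith
    · -- min case
      have hβ0 : 0 < β := lt_trans hα hαβ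
      rcases Bool.eq_false_or_eq_true p.2 with hp | hp <;>
        rcases Bool.eq_false_or_eq_true q.2 with hq | hq <;>
        rw [hp, hq] <;>
        simp only [Bool.not_true, Bool.not_false, hofft, hofff]
      · exact (key4 n hn β hβ0 hβ _ _ _ _).trans (key4 n hn α hα hα2 _ _ _ _).symm
      · exact iff_of_false (mixed_ne n hn β α hβ0 hα hβ hα2 hαβ.ne' _ _ _ _)
          (mixed_ne n hn α β hα hβ0 hα2 hβ hαβ.ne _ _ _ _)
      · exact iff_of_false (mixed_ne n hn α β hα hβ0 hα2 hβ hαβ.ne _ _ _ _)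
          (mixed_ne n hn β α hβ0 hα hβ hα2 hαβ.ne' _ _ _ _)
      · exact (key4 n hn α hα hα2 _ _ _ _).trans (key4 n hn β hβ0 hβ _ _ _ _).symm
  refine ⟨hinv.bijective, ?_⟩
  have hsub : ∀ p q : ({e : V × V // G.Adj e.1 e.2} × Bool), ∀ m : ℕ∞,
      (m ∈ {m : ℕ∞ | ∃ k : ℕ, m = (k : ℕ∞) ∧
        ∃ j : ℕ → ({e : V × V // G.Adj e.1 e.2} × Bool),
          j 0 = p ∧ j k = q ∧ ∀ i < k, distP (j i) (j (i + 1)) = 1}) →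
      (m ∈ {m : ℕ∞ | ∃ k : ℕ, m = (k : ℕ∞) ∧
        ∃ j : ℕ → ({e : V × V // G.Adj e.1 e.2} × Bool),
          j 0 = φ p ∧ j k = φ q ∧ ∀ i < k, distP (j i) (j (i + 1)) = 1}) := by
    rintro p q m ⟨k, rfl, j, hj0, hjk, hstep⟩
    exact ⟨k, rfl, φ ∘ j, by simp [hj0], by simp [hjk],
      fun i hi => (key (j i) (j (i + 1))).mpr (hstep i hi)⟩
  intro p q
  rw [hGd, hGd]
  congr 1
  apply Set.Subset.antisymm
  · intro m hm
    have := hsub (φ p) (φ q) m hm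
    rwa [hinv p, hinv q] at this
  · exact fun m hm => hsub p q m hm
end

section
/- Let (X,d) be a metric space that is not grasshopper-jumps connected, let A ⊆ X be a grasshopper-invariant subset (a union of grasshopper-jump components), and suppose φ : A → A is a bijection with the property that d(z₁,z₂) = 1 iff d(φ(z₁),φ(z₂)) = 1 for z₁,z₂ ∈ A, and there exist y ∈ X \ A and z ∈ A with d(y,z) ≠ d(y,φ(z)). Then the map f : X → X defined by f(p) = φ(p) for p ∈ A and f(p) = p otherwise is a bijection of X preserving the unit distance in both directions (d(p,q) = 1 iff d(f(p),f(q)) = 1) which is not an isometry. -/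
open scoped Classical

/-- If `A` is a grasshopper-invariant subset of a not grasshopper-jumps connected metric
space, `φ : A → A` a bijection preserving the unit distance on `A`, and some point outside
`A` sees a changed distance, then extending `φ` by the identity gives a bijection of `X`
preserving the unit distance in both directions which is not an isometry. -/
theorem stmt9 {X : Type*} [MetricSpace X]
    (A : Set X)
    (hinv : ∀ x ∈ A, ∀ y : X,
      Relation.ReflTransGen (fun a b : X => dist a b = 1) x y → y ∈ A)
    (hnotconn : ∃ x y : X, ¬ Relation.ReflTransGen (fun a b : X => dist a b = 1) x y)
    (φ : X → X) (hφA : Set.BijOn φ A A)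
    (hunit : ∀ z₁ ∈ A, ∀ z₂ ∈ A, (dist z₁ z₂ = 1 ↔ dist (φ z₁) (φ z₂) = 1))
    (hchange : ∃ y ∉ A, ∃ z ∈ A, dist y z ≠ dist y (φ z))
    (f : X → X) (hf : ∀ p : X, f p = if p ∈ A then φ p else p) :
    Function.Bijective f ∧
    (∀ p q : X, dist p q = 1 ↔ dist (f p) (f q) = 1) ∧
    ¬ Isometry f := by
  -- basic facts
  have hstep : ∀ x ∈ A, ∀ y : X, dist x y = 1 → y ∈ A := fun x hx y h =>
    hinv x hx y (Relation.ReflTransGen.single h)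
  have hmem : ∀ p ∈ A, f p = φ p := by
    intro p hp; rw [hf p, if_pos hp]
  have hnmem : ∀ p, p ∉ A → f p = p := by
    intro p hp; rw [hf p, if_neg hp]
  refine ⟨⟨?_, ?_⟩, ?_, ?_⟩
  · -- injective
    intro p q h
    by_cases hp : p ∈ A <;> by_cases hq : q ∈ A
    · rw [hmem p hp, hmem q hq] at h
      exact hφA.injOn hp hq h
    · rw [hmem p hp, hnmem q hq] at h
      exact absurd (h ▸ hφA.mapsTo hp) hq
    · rw [hnmem p hp, hmem q hq] at h
      exact absurd (h ▸ hφA.mapsTo hq) hp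
    · rwa [hnmem p hp, hnmem q hq] at h
  · -- surjective
    intro y
    by_cases hy : y ∈ A
    · obtain ⟨p, hp, hpy⟩ := hφA.surjOn hy
      exact ⟨p, by rw [hmem p hp]; exact hpy⟩
    · exact ⟨y, hnmem y hy⟩
  · -- unit distance
    intro p q
    by_cases hp : p ∈ A <;> by_cases hq : q ∈ A
    · rw [hmem p hp, hmem q hq]; exact hunit p hp q hq
    · rw [hmem p hp, hnmem q hq]
      constructor
      · intro h; exact absurd (hstep p hp q h) hq
      · intro h; exact absurd (hstep (φ p) (hφA.mapsTo hp) q h) hq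
    · rw [hnmem p hp, hmem q hq]
      constructor
      · intro h
        exact absurd (hstep q hq p (by rwa [dist_comm])) hp
      · intro h
        exact absurd (hstep (φ q) (hφA.mapsTo hq) p (by rwa [dist_comm])) hp
    · rw [hnmem p hp, hnmem q hq]
  · -- not an isometry
    obtain ⟨y, hy, z, hz, hne⟩ := hchange
    intro hiso
    apply hne
    have := hiso.dist_eq y z
    rw [hnmem y hy, hmem z hz] at this
    exact this.symm
end

section
/- Let X be a proper Busemann space, a : ℝ → X a geodesic line with ξ = a(+∞), and let Y ⊆ X be the union of (images of) all geodesic lines parallel to a. Assume every two parallel lines in X bound a normed strip foliated by lines parallel to a. Then the quotient metric space Y_ξ = Y/ρ_ξ (identifying points at ρ_ξ-distance 0, where ρ_ξ(x,y) is the infimal distance between the asymptotic rays [xξ], [yξ]) is a geodesic space satisfying the Busemann midpoint inequality: for the projections of three parallel lines b, c, d to points b_ξ, c_ξ, d_ξ ∈ Y_ξ, the midpoints p_ξ of [b_ξ c_ξ] and q_ξ of [b_ξ d_ξ] satisfy ρ_ξ(p_ξ, q_ξ) ≤ ρ_ξ(c_ξ, d_ξ)/2. Moreover, Y_ξ is a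 one-point space if and only if a has no distinct parallel line (rank one). -/
section StmtAux

variable {X : Type*} [MetricSpace X]

/-- Uniqueness of metric midpoints in a Busemann space. -/
lemma stmt13_mid_unique
    (hconv : ∀ x y z m n : X,
      dist x m = dist x y / 2 → dist m y = dist x y / 2 →
      dist x n = dist x z / 2 → dist n z = dist x z / 2 →
      dist m n ≤ dist y z / 2)
    {x y m n : X}
    (h1 : dist x m = dist x y / 2) (h2 : dist m y = dist x y / 2)
    (h3 : dist x n = dist x y / 2) (h4 : dist n y = dist x y / 2) : m = n := by
  have h := hconv x y y m n h1 h2 h3 h4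
  rw [dist_self] at h
  have : dist m n ≤ 0 := by linarith
  exact dist_le_zero.mp (le_antisymm this dist_nonneg ▸ this)

/-- The midpoint map is (1/2,1/2)-Lipschitz. -/
lemma stmt13_mid_lip
    (hgeo : ∀ x y : X, ∃ m : X, dist x m = dist x y / 2 ∧ dist m y = dist x y / 2)
    (hconv : ∀ x y z m n : X,
      dist x m = dist x y / 2 → dist m y = dist x y / 2 →
      dist x n = dist x z / 2 → dist n z = dist x z / 2 →
      dist m n ≤ dist y z / 2)
    {p₁ p₂ q₁ q₂ m n : X}
    (hm1 : dist p₁ m = dist p₁ p₂ / 2) (hm2 : dist m p₂ = dist p₁ p₂ / 2)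
    (hn1 : dist q₁ n = dist q₁ q₂ / 2) (hn2 : dist n q₂ = dist q₁ q₂ / 2) :
    dist m n ≤ (dist p₁ q₁ + dist p₂ q₂) / 2 := by
  obtain ⟨k, hk1, hk2⟩ := hgeo p₁ q₂
  have h1 : dist m k ≤ dist p₂ q₂ / 2 := hconv p₁ p₂ q₂ m k hm1 hm2 hk1 hk2
  have h2 : dist n k ≤ dist q₁ p₁ / 2 := by
    apply hconv q₂ q₁ p₁ n k
    · rw [dist_comm q₂ n, dist_comm q₂ q₁]; exact hn2
    · rw [dist_comm n q₁, dist_comm q₂ q₁]; exact hn1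
    · rw [dist_comm q₂ k, dist_comm q₂ p₁]; exact hk2
    · rw [dist_comm k p₁, dist_comm q₂ p₁]; exact hk1
  have h3 : dist m n ≤ dist m k + dist k n := dist_triangle m k n
  rw [dist_comm k n] at h3
  rw [dist_comm q₁ p₁] at h2
  linarith

/-- Midpoints along a geodesic line. -/
lemma stmt13_line_mid {b : ℝ → X} (hb : ∀ s t : ℝ, dist (b s) (b t) = |s - t|) (s t : ℝ) :
    dist (b s) (b ((s + t) / 2)) = dist (b s) (b t) / 2 ∧
      dist (b ((s + t) / 2)) (b t) = dist (b s) (b t) / 2 := by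
  rw [hb s ((s+t)/2), hb ((s+t)/2) t, hb s t]
  constructor
  · rw [show s - (s+t)/2 = (s-t)/2 by ring, abs_div, abs_two]
  · rw [show (s+t)/2 - t = (s-t)/2 by ring, abs_div, abs_two]

/-- Midpoints along a geodesic ray. -/
lemma stmt13_ray_mid {r : ℝ → X}
    (hr : ∀ s t : ℝ, 0 ≤ s → 0 ≤ t → dist (r s) (r t) = |s - t|)
    {s t : ℝ} (hs : 0 ≤ s) (ht : 0 ≤ t) :
    dist (r s) (r ((s + t) / 2)) = dist (r s) (r t) / 2 ∧
      dist (r ((s + t) / 2)) (r t) = dist (r s) (r t) / 2 := by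
  have hm : 0 ≤ (s+t)/2 := by linarith
  rw [hr s ((s+t)/2) hs hm, hr ((s+t)/2) t hm ht, hr s t hs ht]
  constructor
  · rw [show s - (s+t)/2 = (s-t)/2 by ring, abs_div, abs_two]
  · rw [show (s+t)/2 - t = (s-t)/2 by ring, abs_div, abs_two]

/-- A midpoint convex function on `[0,∞)` which is bounded above is nonincreasing. -/
lemma stmt13_nonincr {φ : ℝ → ℝ} {M : ℝ}
    (mc : ∀ s t : ℝ, 0 ≤ s → 0 ≤ t → φ ((s + t) / 2) ≤ (φ s + φ t) / 2)
    (bd : ∀ s : ℝ, 0 ≤ s → φ s ≤ M) :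
    ∀ s t : ℝ, 0 ≤ s → s ≤ t → φ t ≤ φ s := by
  intro s t hs hst
  by_contra hlt
  push_neg at hlt
  have hd0 : 0 < φ t - φ s := by linarith
  have hts : 0 ≤ t - s := by linarith
  have key : ∀ n : ℕ, φ s + 2 ^ n * (φ t - φ s) ≤ φ (s + 2 ^ n * (t - s)) := by
    intro n
    induction n with
    | zero =>
      have h : s + 2 ^ (0:ℕ) * (t - s) = t := by norm_num
      rw [h]; norm_num
    | succ n ih =>
      have hpos : (0:ℝ) < 2 ^ n := by positivity
      have harg : 0 ≤ s + 2 ^ (n+1) * (t - s) := by positivity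
      have hmid : (s + (s + 2 ^ (n+1) * (t - s))) / 2 = s + 2 ^ n * (t - s) := by ring
      have h1 := mc s (s + 2 ^ (n+1) * (t - s)) hs harg
      rw [hmid] at h1
      have h2 : (2:ℝ) ^ (n+1) = 2 * 2 ^ n := by ring
      nlinarith
  obtain ⟨n, hn⟩ := pow_unbounded_of_one_lt ((M - φ s) / (φ t - φ s)) (one_lt_two (α := ℝ))
  have hb := bd (s + 2 ^ n * (t - s)) (by positivity)
  have hk := key n
  have hpos : (0:ℝ) < 2 ^ n := by positivity
  have : (M - φ s) / (φ t - φ s) < 2 ^ n := hn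
  rw [div_lt_iff₀ hd0] at this
  nlinarith

/-- A midpoint convex function on `ℝ` which is bounded above is constant. -/
lemma stmt13_const {φ : ℝ → ℝ} {M : ℝ}
    (mc : ∀ s t : ℝ, φ ((s + t) / 2) ≤ (φ s + φ t) / 2)
    (bd : ∀ s : ℝ, φ s ≤ M) : ∀ s t : ℝ, φ s = φ t := by
  have H : ∀ s t : ℝ, s ≤ t → φ t ≤ φ s := by
    intro s t hst
    have h := stmt13_nonincr (φ := fun v => φ (s + v)) (M := M)
      (fun u w _ _ => by
        have := mc (s + u) (s + w)
        rw [show (s + u + (s + w)) / 2 = s + (u + w)/2 by ring] at this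
        exact this)
      (fun u _ => bd (s + u)) 0 (t - s) le_rfl (by linarith)
    simpa using h
  have H2 : ∀ s t : ℝ, s ≤ t → φ s ≤ φ t := by
    intro s t hst
    have h := stmt13_nonincr (φ := fun v => φ (t - v)) (M := M)
      (fun u w _ _ => by
        have := mc (t - u) (t - w)
        rw [show (t - u + (t - w)) / 2 = t - (u + w)/2 by ring] at this
        exact this)
      (fun u _ => bd (t - u)) 0 (t - s) le_rfl (by linarith)
    simpa using h
  intro s t
  rcases le_total s t with h | h
  · exact le_antisymm (H2 s t h) (H s t h)
  · exact (le_antisymm (H2 t s h) (H t s h)).symm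


/-- Matched distance between two lines near translates of `a` is constant. -/
lemma stmt13_shift
    (hgeo : ∀ x y : X, ∃ m : X, dist x m = dist x y / 2 ∧ dist m y = dist x y / 2)
    (hconv : ∀ x y z m n : X,
      dist x m = dist x y / 2 → dist m y = dist x y / 2 →
      dist x n = dist x z / 2 → dist n z = dist x z / 2 →
      dist m n ≤ dist y z / 2)
    {a b c : ℝ → X}
    (haF : ∀ s t : ℝ, dist (a s) (a t) = |s - t|)
    (hbF : ∀ s t : ℝ, dist (b s) (b t) = |s - t|)
    (hcF : ∀ s t : ℝ, dist (c s) (c t) = |s - t|)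
    {ub Kb uc Kc : ℝ}
    (hbB : ∀ w : ℝ, dist (b w) (a (ub + w)) ≤ Kb)
    (hcB : ∀ w : ℝ, dist (c w) (a (uc + w)) ≤ Kc)
    (s t v : ℝ) : dist (b (s + v)) (c (t + v)) = dist (b s) (c t) := by
  have hbl : ∀ u w : ℝ, dist (b (s + u)) (b (s + w)) = |u - w| := by
    intro u w; rw [hbF]; congr 1; ring
  have hcl : ∀ u w : ℝ, dist (c (t + u)) (c (t + w)) = |u - w| := by
    intro u w; rw [hcF]; congr 1; ring
  have mc : ∀ u w : ℝ,
      dist (b (s + (u + w) / 2)) (c (t + (u + w) / 2)) ≤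
        (dist (b (s + u)) (c (t + u)) + dist (b (s + w)) (c (t + w))) / 2 := by
    intro u w
    have h1 := stmt13_line_mid (b := fun v => b (s + v)) hbl u w
    have h2 := stmt13_line_mid (b := fun v => c (t + v)) hcl u w
    exact stmt13_mid_lip hgeo hconv h1.1 h1.2 h2.1 h2.2
  have bd : ∀ w : ℝ, dist (b (s + w)) (c (t + w)) ≤ Kb + |ub + s - (uc + t)| + Kc := by
    intro w
    have h1 : dist (b (s + w)) (a (ub + (s + w))) ≤ Kb := hbB (s + w)
    have h2 : dist (a (ub + (s + w))) (a (uc + (t + w))) = |ub + s - (uc + t)| := by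
      rw [haF]; congr 1; ring
    have h3 : dist (a (uc + (t + w))) (c (t + w)) ≤ Kc := by
      rw [dist_comm]; exact hcB (t + w)
    calc dist (b (s + w)) (c (t + w)) ≤
        dist (b (s + w)) (a (ub + (s + w))) + dist (a (ub + (s + w))) (a (uc + (t + w)))
          + dist (a (uc + (t + w))) (c (t + w)) := dist_triangle4 _ _ _ _
      _ ≤ Kb + |ub + s - (uc + t)| + Kc := by rw [h2]; linarith
  have h := stmt13_const (φ := fun w => dist (b (s + w)) (c (t + w))) mc bd v 0
  simpa using h

/-- Existence of a minimal offset between two lines near translates of `a`. -/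
lemma stmt13_attain
    {a b c : ℝ → X}
    (haF : ∀ s t : ℝ, dist (a s) (a t) = |s - t|)
    (hbF : ∀ s t : ℝ, dist (b s) (b t) = |s - t|)
    (hcF : ∀ s t : ℝ, dist (c s) (c t) = |s - t|)
    {ub Kb uc Kc : ℝ}
    (hbB : ∀ w : ℝ, dist (b w) (a (ub + w)) ≤ Kb)
    (hcB : ∀ w : ℝ, dist (c w) (a (uc + w)) ≤ Kc) :
    ∃ δ : ℝ, ∀ δ' : ℝ, dist (b δ) (c 0) ≤ dist (b δ') (c 0) := by
  have hKb : 0 ≤ Kb := le_trans dist_nonneg (hbB 0)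
  have hKc : 0 ≤ Kc := le_trans dist_nonneg (hcB 0)
  have hbcont : Continuous fun δ : ℝ => dist (b δ) (c 0) := by
    have hlb : LipschitzWith 1 b := by
      apply LipschitzWith.of_dist_le_mul
      intro s t
      rw [hbF s t, Real.dist_eq]
      simp
    exact hlb.continuous.dist continuous_const
  set δ₀ := uc - ub with hδ₀
  have h0 : dist (b δ₀) (c 0) ≤ Kb + Kc := by
    have h1 : dist (b δ₀) (a (ub + δ₀)) ≤ Kb := hbB δ₀
    have h2 : dist (a (uc + 0)) (c 0) ≤ Kc := by rw [dist_comm]; exact hcB 0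
    have h3 : ub + δ₀ = uc + 0 := by rw [hδ₀]; ring
    rw [h3] at h1
    calc dist (b δ₀) (c 0) ≤ dist (b δ₀) (a (uc + 0)) + dist (a (uc + 0)) (c 0) :=
        dist_triangle _ _ _
      _ ≤ Kb + Kc := by linarith
  set R := 2 * (Kb + Kc) + 1 with hR
  obtain ⟨δ, hδmem, hmin⟩ := (isCompact_Icc (a := δ₀ - R) (b := δ₀ + R)).exists_isMinOn
    ⟨δ₀, by constructor <;> [linarith; linarith]⟩ hbcont.continuousOn
  rw [isMinOn_iff] at hmin
  refine ⟨δ, fun δ' => ?_⟩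
  by_cases hmem : δ' ∈ Set.Icc (δ₀ - R) (δ₀ + R)
  · exact hmin δ' hmem
  · have hδδ₀ : dist (b δ) (c 0) ≤ Kb + Kc :=
      le_trans (hmin δ₀ (by constructor <;> [linarith; linarith])) h0
    have hfar : R < |δ' - δ₀| := by
      rw [Set.mem_Icc, not_and_or, not_le, not_le] at hmem
      rcases hmem with h | h
      · rw [abs_of_neg (by linarith)]; linarith
      · rw [abs_of_pos (by linarith)]; linarith
    have hlow : |δ' - δ₀| - (Kb + Kc) ≤ dist (b δ') (c 0) := by
      have h1 : dist (b δ') (b δ₀) ≤ dist (b δ') (c 0) + dist (c 0) (b δ₀) :=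
        dist_triangle _ _ _
      rw [hbF, dist_comm (c 0) (b δ₀)] at h1
      linarith
    linarith

/-- Orientation lemma: a line coarsely parallel to the line `a`
admits an orientation under which it stays at bounded distance from translates of `a`. -/
lemma stmt13_orient {a b : ℝ → X}
    (haF : ∀ s t : ℝ, dist (a s) (a t) = |s - t|)
    (hbF : ∀ s t : ℝ, dist (b s) (b t) = |s - t|)
    {C : ℝ} (hpar : ∀ t : ℝ, ∃ s : ℝ, dist (a s) (b t) ≤ C) :
    ∃ ε u K : ℝ, (ε = 1 ∨ ε = -1) ∧ ∀ w : ℝ, dist (b (ε * w)) (a (u + w)) ≤ K := by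
  obtain ⟨u₀, hu₀⟩ := hpar 0
  have hC : 0 ≤ C := le_trans dist_nonneg hu₀
  have claim1 : ∀ v : ℝ,
      dist (b v) (a (u₀ + v)) ≤ 3 * C ∨ dist (b v) (a (u₀ - v)) ≤ 3 * C := by
    intro v
    obtain ⟨s, hs⟩ := hpar v
    have hb0 : dist (b v) (b 0) = |v| := by rw [hbF]; simp
    have F1 : |s - u₀| ≤ |v| + 2 * C := by
      have h := dist_triangle4 (a s) (b v) (b 0) (a u₀)
      rw [hb0, dist_comm (b 0) (a u₀)] at h
      rw [← haF s u₀]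
      linarith
    have F2 : |v| - 2 * C ≤ |s - u₀| := by
      have h := dist_triangle4 (b v) (a s) (a u₀) (b 0)
      rw [hb0, haF s u₀, dist_comm (b v) (a s)] at h
      linarith
    rcases le_total u₀ s with hcase | hcase
    · have habs : |s - u₀| = s - u₀ := abs_of_nonneg (by linarith)
      have key : dist (a s) (a (u₀ + |v|)) ≤ 2 * C := by
        rw [haF]
        rw [habs] at F1 F2
        rw [abs_le]
        constructor <;> [skip; skip] <;> · simp only [sub_le_iff_le_add, neg_le_sub_iff_le_add] <;> linarith
      have hbv : dist (b v) (a (u₀ + |v|)) ≤ 3 * C := by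
        calc dist (b v) (a (u₀ + |v|)) ≤ dist (b v) (a s) + dist (a s) (a (u₀ + |v|)) :=
            dist_triangle _ _ _
          _ ≤ 3 * C := by rw [dist_comm (b v) (a s)]; linarith
      rcases le_or_gt 0 v with hv | hv
      · left
        rw [abs_of_nonneg hv] at hbv; exact hbv
      · right
        rw [abs_of_neg hv, show u₀ + -v = u₀ - v from by ring] at hbv; exact hbv
    · have habs : |s - u₀| = u₀ - s := by rw [abs_of_nonpos (by linarith)]; ring
      have key : dist (a s) (a (u₀ - |v|)) ≤ 2 * C := by
        rw [haF]
        rw [habs] at F1 F2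
        rw [abs_le]
        constructor <;> [skip; skip] <;> · simp only [sub_le_iff_le_add, neg_le_sub_iff_le_add] <;> linarith
      have hbv : dist (b v) (a (u₀ - |v|)) ≤ 3 * C := by
        calc dist (b v) (a (u₀ - |v|)) ≤ dist (b v) (a s) + dist (a s) (a (u₀ - |v|)) :=
            dist_triangle _ _ _
          _ ≤ 3 * C := by rw [dist_comm (b v) (a s)]; linarith
      rcases le_or_gt 0 v with hv | hv
      · right
        rw [abs_of_nonneg hv] at hbv; exact hbv
      · left
        rw [abs_of_neg hv, show u₀ - -v = u₀ + v from by ring] at hbv; exact hbv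
  have claim2 : ∀ v : ℝ, 2 * |v| ≤ dist (b v) (a (u₀ + v)) + dist (b v) (a (u₀ - v)) := by
    intro v
    have h := dist_triangle (a (u₀ + v)) (b v) (a (u₀ - v))
    rw [haF, dist_comm (a (u₀ + v)) (b v)] at h
    have e : |u₀ + v - (u₀ - v)| = 2 * |v| := by
      rw [show u₀ + v - (u₀ - v) = 2 * v from by ring, abs_mul, abs_two]
    rw [e] at h
    exact h
  have hbcont : Continuous b := by
    have hlb : LipschitzWith 1 b := by
      apply LipschitzWith.of_dist_le_mul
      intro s t
      rw [hbF s t, Real.dist_eq]; simp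
    exact hlb.continuous
  have hacont : Continuous a := by
    have hla : LipschitzWith 1 a := by
      apply LipschitzWith.of_dist_le_mul
      intro s t
      rw [haF s t, Real.dist_eq]; simp
    exact hla.continuous
  have hfc : Continuous fun v => dist (b v) (a (u₀ + v)) :=
    hbcont.dist (hacont.comp (continuous_const.add continuous_id))
  have hgc : Continuous fun v => dist (b v) (a (u₀ - v)) :=
    hbcont.dist (hacont.comp (continuous_const.sub continuous_id))
  set V := 3 * C + 1 with hV
  have dichot : ∀ v₁ v₂ : ℝ, V ≤ |v₁| → V ≤ |v₂| → (0 ≤ v₁ ↔ 0 ≤ v₂) →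
      3 * C < dist (b v₁) (a (u₀ + v₁)) → 3 * C < dist (b v₂) (a (u₀ - v₂)) → False := by
    intro v₁ v₂ hv₁V hv₂V hsgn hv₁ hv₂
    have hg₁ : dist (b v₁) (a (u₀ - v₁)) ≤ 3 * C := by
      rcases claim1 v₁ with h | h
      · linarith
      · exact h
    have hf₂ : dist (b v₂) (a (u₀ + v₂)) ≤ 3 * C := by
      rcases claim1 v₂ with h | h
      · exact h
      · linarith
    have hφ1 : 2 ≤ dist (b v₁) (a (u₀ + v₁)) - dist (b v₁) (a (u₀ - v₁)) := by
      have := claim2 v₁; linarith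
    have hφ2 : dist (b v₂) (a (u₀ + v₂)) - dist (b v₂) (a (u₀ - v₂)) ≤ -2 := by
      have := claim2 v₂; linarith
    have hφc : ContinuousOn
        (fun v => dist (b v) (a (u₀ + v)) - dist (b v) (a (u₀ - v))) (Set.uIcc v₂ v₁) :=
      (hfc.sub hgc).continuousOn
    have h0mem : (0:ℝ) ∈ Set.uIcc
        ((fun v => dist (b v) (a (u₀ + v)) - dist (b v) (a (u₀ - v))) v₂)
        ((fun v => dist (b v) (a (u₀ + v)) - dist (b v) (a (u₀ - v))) v₁) := by
      rw [Set.mem_uIcc]; left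
      constructor
      · simp only; linarith
      · simp only; linarith
    obtain ⟨vv, hvvmem, hvv⟩ := intermediate_value_uIcc hφc h0mem
    simp only at hvv
    have hvvV : V ≤ |vv| := by
      rw [Set.mem_uIcc] at hvvmem
      rcases hsgn with ⟨hs1, hs2⟩
      rcases le_or_gt 0 v₁ with hp | hp
      · have hp2 : 0 ≤ v₂ := hs1 hp
        rw [abs_of_nonneg hp] at hv₁V
        rw [abs_of_nonneg hp2] at hv₂V
        rw [abs_of_nonneg (by rcases hvvmem with ⟨h1, _⟩ | ⟨h1, _⟩ <;> linarith)]
        rcases hvvmem with ⟨h1, _⟩ | ⟨h1, _⟩ <;> linarith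
      · have hp2 : ¬ (0 ≤ v₂) := fun h => absurd (hs2 h) (not_le.mpr hp)
        push_neg at hp2
        rw [abs_of_neg hp] at hv₁V
        rw [abs_of_neg hp2] at hv₂V
        rw [abs_of_neg (by rcases hvvmem with ⟨_, h1⟩ | ⟨_, h1⟩ <;> linarith)]
        rcases hvvmem with ⟨_, h1⟩ | ⟨_, h1⟩ <;> linarith
    have hfg : dist (b vv) (a (u₀ + vv)) = dist (b vv) (a (u₀ - vv)) := by linarith
    have hsum : dist (b vv) (a (u₀ + vv)) + dist (b vv) (a (u₀ - vv)) ≤ 6 * C := by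
      rcases claim1 vv with h | h
      · linarith
      · linarith
    have := claim2 vv
    linarith
  have fwd : (∀ v : ℝ, V ≤ v → dist (b v) (a (u₀ + v)) ≤ 3 * C) ∨
      (∀ v : ℝ, V ≤ v → dist (b v) (a (u₀ - v)) ≤ 3 * C) := by
    by_contra h
    push_neg at h
    obtain ⟨⟨v₁, hv₁V, hv₁⟩, ⟨v₂, hv₂V, hv₂⟩⟩ := h
    have hV0 : 0 < V := by rw [hV]; linarith
    exact dichot v₁ v₂ (by rw [abs_of_nonneg (by linarith)]; exact hv₁V)
      (by rw [abs_of_nonneg (by linarith)]; exact hv₂V)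
      (by constructor <;> intro <;> linarith) hv₁ hv₂
  have bwd : (∀ v : ℝ, v ≤ -V → dist (b v) (a (u₀ + v)) ≤ 3 * C) ∨
      (∀ v : ℝ, v ≤ -V → dist (b v) (a (u₀ - v)) ≤ 3 * C) := by
    by_contra h
    push_neg at h
    obtain ⟨⟨v₁, hv₁V, hv₁⟩, ⟨v₂, hv₂V, hv₂⟩⟩ := h
    have hV0 : 0 < V := by rw [hV]; linarith
    exact dichot v₁ v₂ (by rw [abs_of_neg (by linarith)]; linarith)
      (by rw [abs_of_neg (by linarith)]; linarith)
      (by constructor <;> intro <;> linarith) hv₁ hv₂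
  have hmid : ∀ v : ℝ, |v| ≤ V →
      dist (b v) (a (u₀ + v)) ≤ 2 * V + C ∧ dist (b v) (a (u₀ - v)) ≤ 2 * V + C := by
    intro v hv
    have hb0 : dist (b v) (b 0) = |v| := by rw [hbF]; simp
    have h1 : dist (b 0) (a u₀) ≤ C := by rw [dist_comm]; exact hu₀
    constructor
    · have h := dist_triangle4 (b v) (b 0) (a u₀) (a (u₀ + v))
      rw [hb0, haF] at h
      rw [show u₀ - (u₀ + v) = -v from by ring, abs_neg] at h
      linarith
    · have h := dist_triangle4 (b v) (b 0) (a u₀) (a (u₀ - v))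
      rw [hb0, haF] at h
      rw [show u₀ - (u₀ - v) = v from by ring] at h
      linarith
  rcases fwd with hfw | hgw
  · rcases bwd with hfb | hgb
    · refine ⟨1, u₀, 2 * V + 4 * C, Or.inl rfl, fun w => ?_⟩
      rw [one_mul]
      rcases le_total V w with h | h
      · linarith [hfw w h]
      · rcases le_total w (-V) with h' | h'
        · linarith [hfb w h']
        · have habs : |w| ≤ V := abs_le.mpr ⟨by linarith, h⟩
          linarith [(hmid w habs).1]
    · exfalso
      have h1 : dist (b V) (a (u₀ + V)) ≤ 3 * C := hfw V le_rfl
      have h2 : dist (b (-V)) (a (u₀ - -V)) ≤ 3 * C := hgb (-V) le_rfl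
      rw [show u₀ - -V = u₀ + V from by ring] at h2
      have h3 : dist (b V) (b (-V)) = 2 * V := by
        rw [hbF, show V - -V = 2 * V from by ring,
          abs_of_nonneg (by rw [hV]; linarith : (0:ℝ) ≤ 2 * V)]
      have h4 := dist_triangle (b V) (a (u₀ + V)) (b (-V))
      rw [dist_comm (a (u₀ + V)) (b (-V))] at h4
      rw [h3] at h4
      rw [hV] at h4
      linarith
  · rcases bwd with hfb | hgb
    · exfalso
      have h1 : dist (b V) (a (u₀ - V)) ≤ 3 * C := hgw V le_rfl
      have h2 : dist (b (-V)) (a (u₀ + -V)) ≤ 3 * C := hfb (-V) le_rfl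
      rw [show u₀ + -V = u₀ - V from by ring] at h2
      have h3 : dist (b V) (b (-V)) = 2 * V := by
        rw [hbF, show V - -V = 2 * V from by ring,
          abs_of_nonneg (by rw [hV]; linarith : (0:ℝ) ≤ 2 * V)]
      have h4 := dist_triangle (b V) (a (u₀ - V)) (b (-V))
      rw [dist_comm (a (u₀ - V)) (b (-V))] at h4
      rw [h3] at h4
      rw [hV] at h4
      linarith
    · refine ⟨-1, u₀, 2 * V + 4 * C, Or.inr rfl, fun w => ?_⟩
      have e : dist (b (-1 * w)) (a (u₀ + w)) = dist (b (-w)) (a (u₀ - -w)) := by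
        rw [show (-1:ℝ) * w = -w from by ring, show u₀ - -w = u₀ + w from by ring]
      rw [e]
      rcases le_total V (-w) with h | h
      · linarith [hgw (-w) h]
      · rcases le_total (-w) (-V) with h' | h'
        · linarith [hgb (-w) h']
        · have habs : |(-w)| ≤ V := abs_le.mpr ⟨by linarith, h⟩
          linarith [(hmid (-w) habs).2]

/-- The ray from `x` asymptotic to `a` eventually tracks `a` with a fixed offset. -/
lemma stmt13_raybound {a : ℝ → X}
    (haF : ∀ s t : ℝ, dist (a s) (a t) = |s - t|)
    {r : ℝ → X}
    (hrg : ∀ s t : ℝ, 0 ≤ s → 0 ≤ t → dist (r s) (r t) = |s - t|)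
    {C : ℝ}
    (h1 : ∀ t : ℝ, 0 ≤ t → ∃ s : ℝ, 0 ≤ s ∧ dist (r t) (a s) ≤ C)
    (h2 : ∀ t : ℝ, 0 ≤ t → ∃ s : ℝ, 0 ≤ s ∧ dist (a t) (r s) ≤ C) :
    ∃ u K : ℝ, ∀ t : ℝ, 0 ≤ t → dist (r t) (a (u + t)) ≤ K := by
  obtain ⟨u₀, hu₀0, hx⟩ := h1 0 le_rfl
  have hC : 0 ≤ C := le_trans dist_nonneg hx
  refine ⟨u₀, 17 * C, ?_⟩
  intro t ht
  rcases le_or_gt t (8 * C) with h8 | h8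
  · have hr0 : dist (r t) (r 0) = t := by rw [hrg t 0 ht le_rfl]; rw [sub_zero, abs_of_nonneg ht]
    have ha0 : dist (a u₀) (a (u₀ + t)) = t := by
      rw [haF, show u₀ - (u₀ + t) = -t from by ring, abs_neg, abs_of_nonneg ht]
    calc dist (r t) (a (u₀ + t)) ≤
        dist (r t) (r 0) + dist (r 0) (a u₀) + dist (a u₀) (a (u₀ + t)) := dist_triangle4 _ _ _ _
      _ ≤ 17 * C := by rw [hr0, ha0]; linarith
  · obtain ⟨s, hs0, hsC⟩ := h1 t ht
    have hr0 : dist (r t) (r 0) = t := by rw [hrg t 0 ht le_rfl, sub_zero, abs_of_nonneg ht]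
    have i1 : t - 2 * C ≤ |s - u₀| := by
      have h := dist_triangle4 (r t) (a s) (a u₀) (r 0)
      rw [haF s u₀] at h
      rw [dist_comm (a u₀) (r 0)] at h
      have hr00 : dist (r 0) (a u₀) ≤ C := hx
      rw [← hr0]
      have : dist (r 0) (a u₀) = dist (a u₀) (r 0) := dist_comm _ _
      linarith [this ▸ hr00]
    rcases le_or_gt s u₀ with hsu | hsu
    · exfalso
      obtain ⟨s₂, hs₂0, hs₂C⟩ := h2 (u₀ + t) (by linarith)
      have e0 : dist (a u₀) (a (u₀ + t)) = t := by
        rw [haF, show u₀ - (u₀ + t) = -t from by ring, abs_neg, abs_of_nonneg ht]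
      have e1 : dist (r 0) (a (u₀ + t)) ≤ C + t := by
        calc dist (r 0) (a (u₀ + t)) ≤ dist (r 0) (a u₀) + dist (a u₀) (a (u₀ + t)) :=
            dist_triangle _ _ _
          _ ≤ C + t := by rw [e0]; linarith [dist_comm (a u₀) (r 0) ▸ hx]
      have e2 : t - C ≤ dist (r 0) (a (u₀ + t)) := by
        have h := dist_triangle (a u₀) (r 0) (a (u₀ + t))
        rw [e0] at h
        linarith [dist_comm (a u₀) (r 0) ▸ hx]
      have e3 : |s₂ - dist (r 0) (a (u₀ + t))| ≤ C := by
        have h := abs_dist_sub_le (r s₂) (a (u₀ + t)) (r 0)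
        rw [hrg s₂ 0 hs₂0 le_rfl, sub_zero, abs_of_nonneg hs₂0] at h
        rw [dist_comm (a (u₀ + t)) (r 0)] at h
        exact le_trans h (by rw [dist_comm]; exact hs₂C)
      have e4 : |s₂ - t| ≤ 2 * C := by
        rw [abs_le] at e3 ⊢
        constructor <;> linarith [e3.1, e3.2]
      have e5 : dist (a s) (a (u₀ + t)) ≤ 4 * C := by
        have h := dist_triangle4 (a s) (r t) (r s₂) (a (u₀ + t))
        rw [hrg t s₂ ht hs₂0] at h
        have : |t - s₂| ≤ 2 * C := by rw [abs_sub_comm]; exact e4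
        rw [dist_comm (a s) (r t)] at h
        rw [dist_comm (r s₂) (a (u₀ + t))] at h
        linarith [dist_comm (a (u₀ + t)) (r s₂) ▸ hs₂C]
      rw [haF] at e5
      have : u₀ + t - s ≤ 4 * C := by
        have := le_abs_self (s - (u₀ + t))
        have h2' := neg_abs_le (s - (u₀ + t))
        linarith [e5]
      linarith
    · have i2 : |s - u₀| ≤ t + 2 * C := by
        have h := dist_triangle4 (a s) (r t) (r 0) (a u₀)
        rw [hr0] at h
        rw [dist_comm (a s) (r t)] at h
        rw [← haF s u₀]
        linarith [dist_comm (r 0) (a u₀) ▸ hx]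
      have habs : |s - u₀| = s - u₀ := abs_of_nonneg (by linarith)
      rw [habs] at i1 i2
      have key : dist (a s) (a (u₀ + t)) ≤ 2 * C := by
        rw [haF, abs_le]
        constructor <;> · simp only [neg_le_sub_iff_le_add, tsub_le_iff_right]; linarith
      calc dist (r t) (a (u₀ + t)) ≤ dist (r t) (a s) + dist (a s) (a (u₀ + t)) :=
          dist_triangle _ _ _
        _ ≤ 17 * C := by linarith

/-- A geodesic ray asymptotic to `a` starting on an oriented line near `a` follows that line. -/
lemma stmt13_ray_eq_line
    (hgeo : ∀ x y : X, ∃ m : X, dist x m = dist x y / 2 ∧ dist m y = dist x y / 2)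
    (hconv : ∀ x y z m n : X,
      dist x m = dist x y / 2 → dist m y = dist x y / 2 →
      dist x n = dist x z / 2 → dist n z = dist x z / 2 →
      dist m n ≤ dist y z / 2)
    {a b r : ℝ → X}
    (haF : ∀ s t : ℝ, dist (a s) (a t) = |s - t|)
    (hbF : ∀ s t : ℝ, dist (b s) (b t) = |s - t|)
    (hrg : ∀ s t : ℝ, 0 ≤ s → 0 ≤ t → dist (r s) (r t) = |s - t|)
    {u K u' K' : ℝ}
    (hrB : ∀ t : ℝ, 0 ≤ t → dist (r t) (a (u + t)) ≤ K)
    (hbB : ∀ w : ℝ, dist (b w) (a (u' + w)) ≤ K')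
    (h0 : r 0 = b 0) : ∀ s : ℝ, 0 ≤ s → r s = b s := by
  have mc : ∀ s t : ℝ, 0 ≤ s → 0 ≤ t →
      dist (r ((s + t) / 2)) (b ((s + t) / 2)) ≤
        (dist (r s) (b s) + dist (r t) (b t)) / 2 := by
    intro s t hs ht
    have h1 := stmt13_ray_mid hrg hs ht
    have h2 := stmt13_line_mid hbF s t
    exact stmt13_mid_lip hgeo hconv h1.1 h1.2 h2.1 h2.2
  have bd : ∀ s : ℝ, 0 ≤ s → dist (r s) (b s) ≤ K + |u - u'| + K' := by
    intro s hs
    have h1 : dist (r s) (a (u + s)) ≤ K := hrB s hs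
    have h2 : dist (a (u + s)) (a (u' + s)) = |u - u'| := by
      rw [haF, show u + s - (u' + s) = u - u' from by ring]
    have h3 : dist (a (u' + s)) (b s) ≤ K' := by rw [dist_comm]; exact hbB s
    calc dist (r s) (b s) ≤
        dist (r s) (a (u + s)) + dist (a (u + s)) (a (u' + s)) + dist (a (u' + s)) (b s) :=
        dist_triangle4 _ _ _ _
      _ ≤ K + |u - u'| + K' := by rw [h2]; linarith
  intro s hs
  have h := stmt13_nonincr mc bd 0 s le_rfl hs
  have h00 : dist (r 0) (b 0) = 0 := by rw [h0, dist_self]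
  have : dist (r s) (b s) ≤ 0 := by rw [h00] at h; exact h
  exact dist_le_zero.mp this

/-- Uniqueness of the offset minimizing the distance from a line to a point
(rigidity of spheres in Busemann spaces). -/
lemma stmt13_unique_min
    (hgeo : ∀ x y : X, ∃ m : X, dist x m = dist x y / 2 ∧ dist m y = dist x y / 2)
    (hconv : ∀ x y z m n : X,
      dist x m = dist x y / 2 → dist m y = dist x y / 2 →
      dist x n = dist x z / 2 → dist n z = dist x z / 2 →
      dist m n ≤ dist y z / 2)
    {b : ℝ → X} (hbF : ∀ s t : ℝ, dist (b s) (b t) = |s - t|)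
    (c0 : X) {δ₁ δ₂ : ℝ}
    (h1 : ∀ δ : ℝ, dist (b δ₁) c0 ≤ dist (b δ) c0)
    (h2 : ∀ δ : ℝ, dist (b δ₂) c0 ≤ dist (b δ) c0) : δ₁ = δ₂ := by
  set R := dist (b δ₁) c0 with hR
  have hR0 : 0 ≤ R := dist_nonneg
  have hR2 : dist (b δ₂) c0 = R := le_antisymm (h2 δ₁) (h1 δ₂)
  set μ := (δ₁ + δ₂) / 2 with hμ
  have hμR : dist (b μ) c0 = R := by
    refine le_antisymm ?_ (h1 μ)
    have hc : dist c0 c0 = dist c0 c0 / 2 := by rw [dist_self]; norm_num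
    have h := stmt13_mid_lip hgeo hconv (stmt13_line_mid hbF δ₁ δ₂).1
      (stmt13_line_mid hbF δ₁ δ₂).2 hc hc
    rw [hR2] at h
    calc dist (b μ) c0 ≤ (dist (b δ₁) c0 + R) / 2 := h
      _ = R := by rw [← hR]; ring
  have hPM : dist (b δ₁) (b μ) = dist (b δ₁) (b δ₂) / 2 := (stmt13_line_mid hbF δ₁ δ₂).1
  have hMQ : dist (b μ) (b δ₂) = dist (b δ₁) (b δ₂) / 2 := (stmt13_line_mid hbF δ₁ δ₂).2
  have key : ∀ k : ℕ, ∃ ck : X,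
      dist ck (b δ₁) = R / 2 ^ k ∧ dist ck (b δ₂) = R / 2 ^ k ∧ dist ck (b μ) = R / 2 ^ k := by
    intro k
    induction k with
    | zero =>
      refine ⟨c0, ?_, ?_, ?_⟩
      · rw [pow_zero, div_one, dist_comm]
      · rw [pow_zero, div_one, dist_comm]
        exact hR2
      · rw [pow_zero, div_one, dist_comm]
        exact hμR
    | succ k ih =>
      obtain ⟨ck, hp, hq, hm⟩ := ih
      obtain ⟨ck', hck1, hck2⟩ := hgeo ck (b μ)
      have hstep : ∀ P Q : X, dist (b δ₁) (b δ₂) = dist P Q ∨ dist (b δ₁) (b δ₂) = dist Q P → True := fun _ _ _ => trivial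
      -- midpoint towards P := b δ₁
      obtain ⟨p', hp1, hp2⟩ := hgeo (b δ₁) ck
      have hPMQ : dist (b δ₁) (b μ) = dist (b δ₁) (b δ₂) / 2 := hPM
      have hc3 := hconv (b δ₁) ck (b δ₂) p' (b μ) hp1 hp2 hPM hMQ
      have hckp : dist ck p' = R / 2 ^ k / 2 := by
        rw [dist_comm, hp2, dist_comm (b δ₁) ck, hp]
      have htr := dist_triangle ck p' (b μ)
      have hp'm : dist p' (b μ) = R / 2 ^ k / 2 := by
        have hlow : R / 2 ^ k / 2 ≤ dist p' (b μ) := by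
          rw [hckp] at htr; rw [hm] at htr; linarith
        have hhigh : dist p' (b μ) ≤ R / 2 ^ k / 2 := by
          rw [hq] at hc3; linarith
        linarith
      have hp'mid : p' = ck' := by
        refine stmt13_mid_unique hconv ?_ ?_ hck1 hck2
        · rw [hckp, hm]
        · rw [hp'm, hm]
      -- midpoint towards Q := b δ₂
      obtain ⟨q', hq1, hq2⟩ := hgeo (b δ₂) ck
      have hQM : dist (b δ₂) (b μ) = dist (b δ₂) (b δ₁) / 2 := by
        rw [dist_comm (b δ₂) (b μ), hMQ, dist_comm (b δ₂) (b δ₁)]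
      have hMP : dist (b μ) (b δ₁) = dist (b δ₂) (b δ₁) / 2 := by
        rw [dist_comm (b μ) (b δ₁), hPM, dist_comm (b δ₂) (b δ₁)]
      have hc4 := hconv (b δ₂) ck (b δ₁) q' (b μ) hq1 hq2 hQM hMP
      have hckq : dist ck q' = R / 2 ^ k / 2 := by
        rw [dist_comm, hq2, dist_comm (b δ₂) ck, hq]
      have htr2 := dist_triangle ck q' (b μ)
      have hq'm : dist q' (b μ) = R / 2 ^ k / 2 := by
        have hlow : R / 2 ^ k / 2 ≤ dist q' (b μ) := by
          rw [hckq] at htr2; rw [hm] at htr2; linarith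
        have hhigh : dist q' (b μ) ≤ R / 2 ^ k / 2 := by
          rw [hp] at hc4; linarith
        linarith
      have hq'mid : q' = ck' := by
        refine stmt13_mid_unique hconv ?_ ?_ hck1 hck2
        · rw [hckq, hm]
        · rw [hq'm, hm]
      refine ⟨ck', ?_, ?_, ?_⟩
      · rw [← hp'mid, dist_comm, hp1, dist_comm (b δ₁) ck, hp]
        rw [pow_succ]; ring
      · rw [← hq'mid, dist_comm, hq1, dist_comm (b δ₂) ck, hq]
        rw [pow_succ]; ring
      · rw [hck2, hm, pow_succ]; ring
  have hPQ : ∀ k : ℕ, dist (b δ₁) (b δ₂) ≤ 2 * (R / 2 ^ k) := by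
    intro k
    obtain ⟨ck, hp, hq, _⟩ := key k
    calc dist (b δ₁) (b δ₂) ≤ dist (b δ₁) ck + dist ck (b δ₂) := dist_triangle _ _ _
      _ ≤ 2 * (R / 2 ^ k) := by rw [dist_comm (b δ₁) ck, hp, hq]; linarith
  have hzero : dist (b δ₁) (b δ₂) = 0 := by
    by_contra hne
    have hpos : 0 < dist (b δ₁) (b δ₂) := lt_of_le_of_ne dist_nonneg (Ne.symm hne)
    obtain ⟨k, hk⟩ := pow_unbounded_of_one_lt (2 * R / dist (b δ₁) (b δ₂)) (one_lt_two (α := ℝ))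
    have h2k : (0:ℝ) < 2 ^ k := by positivity
    rw [div_lt_iff₀ hpos] at hk
    have hthis := hPQ k
    rw [← mul_div_assoc, le_div_iff₀ h2k, mul_comm] at hthis
    linarith
  rw [hbF] at hzero
  have := abs_eq_zero.mp hzero
  linarith

end StmtAux



/-- Let `a` be a geodesic line in a proper Busemann space `X` with endpoint `ξ = a(+∞)`
(represented by the assignment `ray x` of the ray `[xξ]` from each point), and let `Y` be
the union of all lines parallel to `a`.  Assuming the normed strip lemma (segments between
lines parallel to `a` stay in `Y`), the quotient pseudometric space `(Y, ρ_ξ)` is geodesic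
and satisfies the Busemann midpoint inequality; it is a one-point space iff `a` is of
rank one (every line parallel to `a` has the same image as `a`). -/
theorem stmt13 {X : Type*} [MetricSpace X] [ProperSpace X]
    (hgeo : ∀ x y : X, ∃ m : X, dist x m = dist x y / 2 ∧ dist m y = dist x y / 2)
    (hconv : ∀ x y z m n : X,
      dist x m = dist x y / 2 → dist m y = dist x y / 2 →
      dist x n = dist x z / 2 → dist n z = dist x z / 2 →
      dist m n ≤ dist y z / 2)
    (IsLine : (ℝ → X) → Prop)
    (hIsLine : ∀ b : ℝ → X, IsLine b ↔ ∀ s t : ℝ, dist (b s) (b t) = |s - t|)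
    (Parallel : (ℝ → X) → (ℝ → X) → Prop)
    (hParallel : ∀ b c : ℝ → X, Parallel b c ↔
      ∃ C : ℝ, (∀ s : ℝ, ∃ t : ℝ, dist (b s) (c t) ≤ C) ∧
        (∀ t : ℝ, ∃ s : ℝ, dist (b s) (c t) ≤ C))
    (a : ℝ → X) (haline : IsLine a)
    (Y : Set X)
    (hY : Y = {x : X | ∃ b : ℝ → X, IsLine b ∧ Parallel a b ∧ x ∈ Set.range b})
    (ray : X → ℝ → X)
    (hray0 : ∀ x : X, ray x 0 = x)
    (hray_geo : ∀ x : X, ∀ s t : ℝ, 0 ≤ s → 0 ≤ t →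
      dist (ray x s) (ray x t) = |s - t|)
    (hray_asymp : ∀ x : X, ∃ C : ℝ, ∀ t : ℝ, 0 ≤ t →
      (∃ s : ℝ, 0 ≤ s ∧ dist (ray x t) (a s) ≤ C) ∧
      (∃ s : ℝ, 0 ≤ s ∧ dist (a t) (ray x s) ≤ C))
    (ρ : X → X → ℝ)
    (hρ : ∀ x y : X, ρ x y =
      sInf {e : ℝ | ∃ s t : ℝ, 0 ≤ s ∧ 0 ≤ t ∧ e = dist (ray x s) (ray y t)})
    (hstrip : ∀ b c : ℝ → X, IsLine b → IsLine c → Parallel a b → Parallel a c →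
      ∀ p ∈ Set.range b, ∀ q ∈ Set.range c, ∀ z : X,
        dist p z + dist z q = dist p q → z ∈ Y) :
    (∀ x ∈ Y, ∀ y ∈ Y, ∃ m ∈ Y, ρ x m = ρ x y / 2 ∧ ρ m y = ρ x y / 2) ∧
    (∀ x ∈ Y, ∀ y ∈ Y, ∀ z ∈ Y, ∀ m ∈ Y, ∀ n ∈ Y,
      ρ x m = ρ x y / 2 → ρ m y = ρ x y / 2 →
      ρ x n = ρ x z / 2 → ρ n z = ρ x z / 2 →
      ρ m n ≤ ρ y z / 2) ∧
    ((∀ x ∈ Y, ∀ y ∈ Y, ρ x y = 0) ↔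
      (∀ b : ℝ → X, IsLine b → Parallel a b → Set.range b = Set.range a)) := by
  have haF : ∀ s t : ℝ, dist (a s) (a t) = |s - t| := (hIsLine a).mp haline
  have Sne : ∀ x y : X,
      Set.Nonempty {e : ℝ | ∃ s t : ℝ, 0 ≤ s ∧ 0 ≤ t ∧ e = dist (ray x s) (ray y t)} :=
    fun x y => ⟨dist (ray x 0) (ray y 0), 0, 0, le_rfl, le_rfl, rfl⟩
  have Sbdd : ∀ x y : X,
      BddBelow {e : ℝ | ∃ s t : ℝ, 0 ≤ s ∧ 0 ≤ t ∧ e = dist (ray x s) (ray y t)} :=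
    fun x y => ⟨0, by rintro e ⟨s, t, hs, ht, rfl⟩; exact dist_nonneg⟩
  have rho_nonneg : ∀ x y : X, 0 ≤ ρ x y := by
    intro x y
    rw [hρ x y]
    exact le_csInf (Sne x y) (by rintro e ⟨s, t, hs, ht, rfl⟩; exact dist_nonneg)
  have rho_symm : ∀ x y : X, ρ x y = ρ y x := by
    intro x y
    rw [hρ x y, hρ y x]
    congr 1
    ext e
    constructor
    · rintro ⟨s, t, hs, ht, rfl⟩
      exact ⟨t, s, ht, hs, dist_comm _ _⟩
    · rintro ⟨s, t, hs, ht, rfl⟩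
      exact ⟨t, s, ht, hs, dist_comm _ _⟩
  -- `master`: packaged oriented line through each point of Y
  have master : ∀ x : X, x ∈ Y → ∃ b : ℝ → X, ∃ u K : ℝ,
      (∀ s t : ℝ, dist (b s) (b t) = |s - t|) ∧
      (∀ w : ℝ, dist (b w) (a (u + w)) ≤ K) ∧
      b 0 = x ∧ (∀ s : ℝ, 0 ≤ s → ray x s = b s) ∧ IsLine b ∧ Parallel a b := by
    intro x hx
    rw [hY] at hx
    simp only [Set.mem_setOf_eq] at hx
    obtain ⟨b₀, hb₀line, hb₀par, t₀, hb₀t₀⟩ := hx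
    have hb₀F : ∀ s t : ℝ, dist (b₀ s) (b₀ t) = |s - t| := (hIsLine b₀).mp hb₀line
    obtain ⟨C, hC1, hC2⟩ := (hParallel a b₀).mp hb₀par
    obtain ⟨ε, u, K, hε, hor⟩ := stmt13_orient haF hb₀F hC2
    have hεsq : ε * ε = 1 := by rcases hε with h | h <;> rw [h] <;> norm_num
    set b : ℝ → X := fun w => b₀ (ε * (w + ε * t₀)) with hbdef
    have hbF : ∀ s t : ℝ, dist (b s) (b t) = |s - t| := by
      intro s t
      show dist (b₀ (ε * (s + ε * t₀))) (b₀ (ε * (t + ε * t₀))) = |s - t|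
      rw [hb₀F]
      rcases hε with h | h <;> rw [h]
      · rw [show 1 * (s + 1 * t₀) - 1 * (t + 1 * t₀) = s - t from by ring]
      · rw [show -1 * (s + -1 * t₀) - -1 * (t + -1 * t₀) = -(s - t) from by ring, abs_neg]
    have hb0 : b 0 = x := by
      show b₀ (ε * (0 + ε * t₀)) = x
      rw [show ε * (0 + ε * t₀) = ε * ε * t₀ from by ring, hεsq, one_mul]
      exact hb₀t₀
    have hbB : ∀ w : ℝ, dist (b w) (a (u + ε * t₀ + w)) ≤ K := by
      intro w
      have h := hor (w + ε * t₀)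
      show dist (b₀ (ε * (w + ε * t₀))) (a (u + ε * t₀ + w)) ≤ K
      rw [show u + ε * t₀ + w = u + (w + ε * t₀) from by ring]
      exact h
    obtain ⟨Cx, hCx⟩ := hray_asymp x
    obtain ⟨ux, Kx, hrayB⟩ := stmt13_raybound haF (hray_geo x)
      (fun t ht => (hCx t ht).1) (fun t ht => (hCx t ht).2)
    have hray_eq : ∀ s : ℝ, 0 ≤ s → ray x s = b s :=
      stmt13_ray_eq_line hgeo hconv haF hbF (hray_geo x) hrayB hbB
        (by rw [hray0 x, hb0])
    refine ⟨b, u + ε * t₀, K, hbF, hbB, hb0, hray_eq, (hIsLine b).mpr hbF, ?_⟩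
    rw [hParallel]
    refine ⟨K, fun s => ⟨s - (u + ε * t₀), ?_⟩, fun t => ⟨u + ε * t₀ + t, ?_⟩⟩
    · have h := hbB (s - (u + ε * t₀))
      rw [show u + ε * t₀ + (s - (u + ε * t₀)) = s from by ring] at h
      rw [dist_comm]
      exact h
    · rw [dist_comm]
      exact hbB t
  -- `rhoval`: the value of ρ as a minimal offset distance
  have rhoval : ∀ (x y : X) (bx byl : ℝ → X) (ux Kx uy Ky : ℝ),
      (∀ s t : ℝ, dist (bx s) (bx t) = |s - t|) →
      (∀ w : ℝ, dist (bx w) (a (ux + w)) ≤ Kx) →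
      (∀ s : ℝ, 0 ≤ s → ray x s = bx s) →
      (∀ s t : ℝ, dist (byl s) (byl t) = |s - t|) →
      (∀ w : ℝ, dist (byl w) (a (uy + w)) ≤ Ky) →
      (∀ s : ℝ, 0 ≤ s → ray y s = byl s) →
      ∃ δ : ℝ, (∀ δ' : ℝ, dist (bx δ) (byl 0) ≤ dist (bx δ') (byl 0)) ∧
        ρ x y = dist (bx δ) (byl 0) := by
    intro x y bx byl ux Kx uy Ky hbxF hbxB hrx hbyF hbyB hry
    obtain ⟨δ, hδ⟩ := stmt13_attain haF hbxF hbyF hbxB hbyB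
    refine ⟨δ, hδ, ?_⟩
    rw [hρ x y]
    apply le_antisymm
    · apply csInf_le (Sbdd x y)
      refine ⟨max δ 0, max (-δ) 0, le_max_right _ _, le_max_right _ _, ?_⟩
      rw [hrx _ (le_max_right _ _), hry _ (le_max_right _ _)]
      have hsub : max δ 0 - max (-δ) 0 = δ := by
        rcases le_total 0 δ with h | h
        · rw [max_eq_left h, max_eq_right (by linarith : -δ ≤ 0)]; ring
        · rw [max_eq_right h, max_eq_left (by linarith : (0:ℝ) ≤ -δ)]; ring
      have hsh := stmt13_shift hgeo hconv haF hbxF hbyF hbxB hbyB δ 0 (max (-δ) 0)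
      rw [zero_add, show δ + max (-δ) 0 = max δ 0 from by linarith] at hsh
      exact hsh.symm
    · apply le_csInf (Sne x y)
      rintro e ⟨s, t, hs, ht, rfl⟩
      rw [hrx s hs, hry t ht]
      have hsh := stmt13_shift hgeo hconv haF hbxF hbyF hbxB hbyB (s - t) 0 t
      rw [show s - t + t = s from by ring, zero_add] at hsh
      rw [hsh]
      exact hδ (s - t)
  -- triangle inequality on Y
  have rho_tri : ∀ x : X, x ∈ Y → ∀ y : X, y ∈ Y → ∀ z : X, z ∈ Y →
      ρ x z ≤ ρ x y + ρ y z := by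
    intro x hx y hy z hz
    obtain ⟨bx, ux, Kx, hbxF, hbxB, hbx0, hbxr, _, _⟩ := master x hx
    obtain ⟨bb, uy, Ky, hbyF, hbyB, hby0, hbyr, _, _⟩ := master y hy
    obtain ⟨bz, uz, Kz, hbzF, hbzB, hbz0, hbzr, _, _⟩ := master z hz
    obtain ⟨δ₁, hmin1, heq1⟩ := rhoval x y bx bb ux Kx uy Ky hbxF hbxB hbxr hbyF hbyB hbyr
    obtain ⟨δ₂, hmin2, heq2⟩ := rhoval y z bb bz uy Ky uz Kz hbyF hbyB hbyr hbzF hbzB hbzr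
    obtain ⟨δ₃, hmin3, heq3⟩ := rhoval x z bx bz ux Kx uz Kz hbxF hbxB hbxr hbzF hbzB hbzr
    have hslide : dist (bb 0) (bz (-δ₂)) = dist (bb δ₂) (bz 0) := by
      have hsh := stmt13_shift hgeo hconv haF hbyF hbzF hbyB hbzB δ₂ 0 (-δ₂)
      rw [show δ₂ + -δ₂ = 0 from by ring, zero_add] at hsh
      exact hsh
    have hxz : dist (bx (δ₁ + δ₂)) (bz 0) = dist (bx δ₁) (bz (-δ₂)) := by
      have hsh2 := stmt13_shift hgeo hconv haF hbxF hbzF hbxB hbzB δ₁ (-δ₂) δ₂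
      rw [show -δ₂ + δ₂ = 0 from by ring] at hsh2
      exact hsh2
    have htri := dist_triangle (bx δ₁) (bb 0) (bz (-δ₂))
    rw [heq1, heq2, heq3]
    calc dist (bx δ₃) (bz 0) ≤ dist (bx (δ₁ + δ₂)) (bz 0) := hmin3 _
      _ = dist (bx δ₁) (bz (-δ₂)) := hxz
      _ ≤ dist (bx δ₁) (bb 0) + dist (bb 0) (bz (-δ₂)) := htri
      _ = dist (bx δ₁) (bb 0) + dist (bb δ₂) (bz 0) := by rw [hslide]
  -- Goal 1: existence of ρ-midpoints
  have goal1 : ∀ x ∈ Y, ∀ y ∈ Y, ∃ m ∈ Y, ρ x m = ρ x y / 2 ∧ ρ m y = ρ x y / 2 := by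
    intro x hx y hy
    obtain ⟨bx, ux, Kx, hbxF, hbxB, hbx0, hbxr, hbxL, hbxP⟩ := master x hx
    obtain ⟨bb, uy, Ky, hbyF, hbyB, hby0, hbyr, hbyL, hbyP⟩ := master y hy
    obtain ⟨δ, hmin, heq⟩ := rhoval x y bx bb ux Kx uy Ky hbxF hbxB hbxr hbyF hbyB hbyr
    obtain ⟨m, hm1, hm2⟩ := hgeo (bx δ) (bb 0)
    have hmY : m ∈ Y := by
      apply hstrip bx bb hbxL hbyL hbxP hbyP (bx δ) ⟨δ, rfl⟩ (bb 0) ⟨0, rfl⟩ m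
      linarith
    obtain ⟨bm, um, Km, hbmF, hbmB, hbm0, hbmr, _, _⟩ := master m hmY
    obtain ⟨δ₁, hmin1, heq1⟩ := rhoval x m bx bm ux Kx um Km hbxF hbxB hbxr hbmF hbmB hbmr
    obtain ⟨δ₂, hmin2, heq2⟩ := rhoval m y bm bb um Km uy Ky hbmF hbmB hbmr hbyF hbyB hbyr
    have hup1 : ρ x m ≤ ρ x y / 2 := by
      rw [heq1, heq]
      calc dist (bx δ₁) (bm 0) ≤ dist (bx δ) (bm 0) := hmin1 δ
        _ = dist (bx δ) m := by rw [hbm0]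
        _ = dist (bx δ) (bb 0) / 2 := hm1
    have hup2 : ρ m y ≤ ρ x y / 2 := by
      rw [heq2, heq]
      calc dist (bm δ₂) (bb 0) ≤ dist (bm 0) (bb 0) := hmin2 0
        _ = dist m (bb 0) := by rw [hbm0]
        _ = dist (bx δ) (bb 0) / 2 := hm2
    have htri := rho_tri x hx m hmY y hy
    exact ⟨m, hmY, by linarith, by linarith⟩
  -- Goal 3
  have goal3 : (∀ x ∈ Y, ∀ y ∈ Y, ρ x y = 0) ↔
      (∀ b : ℝ → X, IsLine b → Parallel a b → Set.range b = Set.range a) := by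
    have haB : ∀ w : ℝ, dist (a w) (a ((0:ℝ) + w)) ≤ 0 := by
      intro w; rw [zero_add, dist_self]
    have haY : a 0 ∈ Y := by
      rw [hY]
      refine ⟨a, haline, ?_, ⟨0, rfl⟩⟩
      rw [hParallel]
      exact ⟨0, fun s => ⟨s, by rw [dist_self]⟩, fun t => ⟨t, by rw [dist_self]⟩⟩
    constructor
    · intro h b hbline hbpar
      have hbF : ∀ s t : ℝ, dist (b s) (b t) = |s - t| := (hIsLine b).mp hbline
      obtain ⟨C, hC1, hC2⟩ := (hParallel a b).mp hbpar
      obtain ⟨ε, u, K, hε, hor⟩ := stmt13_orient haF hbF hC2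
      have hεsq : ε * ε = 1 := by rcases hε with h' | h' <;> rw [h'] <;> norm_num
      set bt : ℝ → X := fun w => b (ε * w) with hbt
      have hbtF : ∀ s t : ℝ, dist (bt s) (bt t) = |s - t| := by
        intro s t
        show dist (b (ε * s)) (b (ε * t)) = |s - t|
        rw [hbF]
        rcases hε with h' | h' <;> rw [h']
        · norm_num
        · rw [show -1 * s - -1 * t = -(s - t) from by ring, abs_neg]
      have hbtB : ∀ w : ℝ, dist (bt w) (a (u + w)) ≤ K := hor
      have hxY : bt 0 ∈ Y := by
        rw [hY]
        exact ⟨b, hbline, hbpar, ⟨ε * 0, rfl⟩⟩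
      obtain ⟨Cx, hCx⟩ := hray_asymp (bt 0)
      obtain ⟨ux, Kx, hrayB⟩ := stmt13_raybound haF (hray_geo (bt 0))
        (fun t ht => (hCx t ht).1) (fun t ht => (hCx t ht).2)
      have hrx : ∀ s : ℝ, 0 ≤ s → ray (bt 0) s = bt s :=
        stmt13_ray_eq_line hgeo hconv haF hbtF (hray_geo (bt 0)) hrayB hbtB (hray0 (bt 0))
      obtain ⟨Ca, hCa⟩ := hray_asymp (a 0)
      obtain ⟨ua, Ka, hrayBa⟩ := stmt13_raybound haF (hray_geo (a 0))
        (fun t ht => (hCa t ht).1) (fun t ht => (hCa t ht).2)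
      have hra : ∀ s : ℝ, 0 ≤ s → ray (a 0) s = a s :=
        stmt13_ray_eq_line hgeo hconv haF haF (hray_geo (a 0)) hrayBa haB (hray0 (a 0))
      obtain ⟨δ, hmin, heq⟩ := rhoval (bt 0) (a 0) bt a u K 0 0 hbtF hbtB hrx haF haB hra
      rw [h (bt 0) hxY (a 0) haY] at heq
      have hbta : bt δ = a 0 := dist_eq_zero.mp heq.symm
      have hall : ∀ v : ℝ, bt (δ + v) = a v := by
        intro v
        have hsh := stmt13_shift hgeo hconv haF hbtF haF hbtB haB δ 0 v
        rw [zero_add] at hsh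
        rw [hbta, dist_self] at hsh
        exact dist_eq_zero.mp hsh
      ext p
      simp only [Set.mem_range]
      constructor
      · rintro ⟨t, rfl⟩
        refine ⟨ε * t - δ, ?_⟩
        have h1 := hall (ε * t - δ)
        rw [show δ + (ε * t - δ) = ε * t from by ring] at h1
        rw [← h1]
        show b (ε * (ε * t)) = b t
        rw [show ε * (ε * t) = t from by rw [← mul_assoc, hεsq, one_mul]]
      · rintro ⟨s, rfl⟩
        refine ⟨ε * (δ + s), ?_⟩
        have h1 := hall s
        rw [← h1]
    · intro h x hx y hy
      obtain ⟨bx, ux, Kx, hbxF, hbxB, hbx0, hbxr, hbxL, hbxP⟩ := master x hx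
      obtain ⟨bb, uy, Ky, hbyF, hbyB, hby0, hbyr, hbyL, hbyP⟩ := master y hy
      have hrx := h bx hbxL hbxP
      have hry := h bb hbyL hbyP
      have hmem : bx 0 ∈ Set.range bb := by
        rw [hry, ← hrx]
        exact ⟨0, rfl⟩
      obtain ⟨tt, htt⟩ := hmem
      obtain ⟨δ, hmin, heq⟩ := rhoval x y bx bb ux Kx uy Ky hbxF hbxB hbxr hbyF hbyB hbyr
      have hzero : dist (bx (-tt)) (bb 0) = 0 := by
        have hsh := stmt13_shift hgeo hconv haF hbxF hbyF hbxB hbyB (-tt) 0 tt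
        rw [show -tt + tt = 0 from by ring, zero_add] at hsh
        rw [← hsh, htt, dist_self]
      have hle : ρ x y ≤ 0 := by
        rw [heq]
        calc dist (bx δ) (bb 0) ≤ dist (bx (-tt)) (bb 0) := hmin (-tt)
          _ = 0 := hzero
      exact le_antisymm hle (rho_nonneg x y)
  -- Goal 2: Busemann inequality in the quotient
  have goal2 : ∀ x ∈ Y, ∀ y ∈ Y, ∀ z ∈ Y, ∀ m ∈ Y, ∀ n ∈ Y,
      ρ x m = ρ x y / 2 → ρ m y = ρ x y / 2 →
      ρ x n = ρ x z / 2 → ρ n z = ρ x z / 2 →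
      ρ m n ≤ ρ y z / 2 := by
    intro x hx y hy z hz m hm n hn hxm hmy hxn hnz
    obtain ⟨bx, ux, Kx, hbxF, hbxB, hbx0, hbxr, hbxL, hbxP⟩ := master x hx
    obtain ⟨bc, uc, Kc, hbcF, hbcB, hbc0, hbcr, hbcL, hbcP⟩ := master y hy
    obtain ⟨be, ue, Ke, hbeF, hbeB, hbe0, hber, hbeL, hbeP⟩ := master z hz
    obtain ⟨bm, um, Km, hbmF, hbmB, hbm0, hbmr, hbmL, hbmP⟩ := master m hm
    obtain ⟨bn, un, Kn, hbnF, hbnB, hbn0, hbnr, hbnL, hbnP⟩ := master n hn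
    obtain ⟨δxy, hminxy, heqxy⟩ := rhoval x y bx bc ux Kx uc Kc hbxF hbxB hbxr hbcF hbcB hbcr
    obtain ⟨δxz, hminxz, heqxz⟩ := rhoval x z bx be ux Kx ue Ke hbxF hbxB hbxr hbeF hbeB hber
    obtain ⟨δce, hmince, heqce⟩ := rhoval y z bc be uc Kc ue Ke hbcF hbcB hbcr hbeF hbeB hber
    obtain ⟨δ₁, hmin1, heq1⟩ := rhoval x m bx bm ux Kx um Km hbxF hbxB hbxr hbmF hbmB hbmr
    obtain ⟨δ₂, hmin2, heq2⟩ := rhoval m y bm bc um Km uc Kc hbmF hbmB hbmr hbcF hbcB hbcr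
    obtain ⟨δ₁', hmin1', heq1'⟩ := rhoval x n bx bn ux Kx un Kn hbxF hbxB hbxr hbnF hbnB hbnr
    obtain ⟨δ₂', hmin2', heq2'⟩ := rhoval n z bn be un Kn ue Ke hbnF hbnB hbnr hbeF hbeB hber
    set r : ℝ := ρ x y / 2 with hr
    set r' : ℝ := ρ x z / 2 with hr'
    -- m is the midpoint of a minimal (bx, bc) configuration
    have hAm : dist (bx δ₁) m = r := by rw [← hbm0, ← heq1, hxm]
    have hmC : dist m (bc (-δ₂)) = r := by
      rw [← hbm0]
      have hsh := stmt13_shift hgeo hconv haF hbmF hbcF hbmB hbcB 0 (-δ₂) δ₂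
      rw [zero_add, show -δ₂ + δ₂ = 0 from by ring] at hsh
      rw [← hsh, ← heq2, hmy]
    have hACoff : dist (bx (δ₁ + δ₂)) (bc 0) = dist (bx δ₁) (bc (-δ₂)) := by
      have hsh := stmt13_shift hgeo hconv haF hbxF hbcF hbxB hbcB δ₁ (-δ₂) δ₂
      rw [show -δ₂ + δ₂ = 0 from by ring] at hsh
      exact hsh
    have hxy2r : ρ x y = 2 * r := by rw [hr]; ring
    have hAC : dist (bx δ₁) (bc (-δ₂)) = 2 * r := by
      apply le_antisymm
      · calc dist (bx δ₁) (bc (-δ₂)) ≤ dist (bx δ₁) m + dist m (bc (-δ₂)) := dist_triangle _ _ _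
          _ = 2 * r := by rw [hAm, hmC]; ring
      · rw [← hACoff]
        calc 2 * r = dist (bx δxy) (bc 0) := by rw [← heqxy, hxy2r]
          _ ≤ dist (bx (δ₁ + δ₂)) (bc 0) := hminxy _
    have hδsum : δ₁ + δ₂ = δxy := by
      apply stmt13_unique_min hgeo hconv hbxF (bc 0) ?_ hminxy
      intro δ'
      rw [hACoff, hAC, ← hxy2r, heqxy]
      exact hminxy δ'
    -- n is the midpoint of a minimal (bx, be) configuration
    have hAn : dist (bx δ₁') n = r' := by rw [← hbn0, ← heq1', hxn]
    have hnE : dist n (be (-δ₂')) = r' := by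
      rw [← hbn0]
      have hsh := stmt13_shift hgeo hconv haF hbnF hbeF hbnB hbeB 0 (-δ₂') δ₂'
      rw [zero_add, show -δ₂' + δ₂' = 0 from by ring] at hsh
      rw [← hsh, ← heq2', hnz]
    have hAEoff : dist (bx (δ₁' + δ₂')) (be 0) = dist (bx δ₁') (be (-δ₂')) := by
      have hsh := stmt13_shift hgeo hconv haF hbxF hbeF hbxB hbeB δ₁' (-δ₂') δ₂'
      rw [show -δ₂' + δ₂' = 0 from by ring] at hsh
      exact hsh
    have hxz2r : ρ x z = 2 * r' := by rw [hr']; ring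
    have hAE : dist (bx δ₁') (be (-δ₂')) = 2 * r' := by
      apply le_antisymm
      · calc dist (bx δ₁') (be (-δ₂')) ≤ dist (bx δ₁') n + dist n (be (-δ₂')) :=
            dist_triangle _ _ _
          _ = 2 * r' := by rw [hAn, hnE]; ring
      · rw [← hAEoff]
        calc 2 * r' = dist (bx δxz) (be 0) := by rw [← heqxz, hxz2r]
          _ ≤ dist (bx (δ₁' + δ₂')) (be 0) := hminxz _
    have hδsum' : δ₁' + δ₂' = δxz := by
      apply stmt13_unique_min hgeo hconv hbxF (be 0) ?_ hminxz
      intro δ'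
      rw [hAEoff, hAE, ← hxz2r, heqxz]
      exact hminxz δ'
    -- midpoints F and G over the optimal (bc, be) configuration
    obtain ⟨F, hF1, hF2⟩ := hgeo (bx 0) (bc δce)
    obtain ⟨G, hG1, hG2⟩ := hgeo (bx 0) (be 0)
    have hFG : dist F G ≤ dist (bc δce) (be 0) / 2 :=
      hconv (bx 0) (bc δce) (be 0) F G hF1 hF2 hG1 hG2
    have hFY : F ∈ Y :=
      hstrip bx bc hbxL hbcL hbxP hbcP (bx 0) ⟨0, rfl⟩ (bc δce) ⟨δce, rfl⟩ F (by linarith)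
    have hGY : G ∈ Y :=
      hstrip bx be hbxL hbeL hbxP hbeP (bx 0) ⟨0, rfl⟩ (be 0) ⟨0, rfl⟩ G (by linarith)
    -- F lies on the line bm
    set pt : ℝ := (0 + (δce + δxy)) / 2 with hptdef
    set qt : ℝ := (δce + -δxy) / 2 with hqtdef
    have hP'C : dist (bx (δce + δxy)) (bc δce) = 2 * r := by
      have hsh := stmt13_shift hgeo hconv haF hbxF hbcF hbxB hbcB δxy 0 δce
      rw [zero_add, show δxy + δce = δce + δxy from by ring] at hsh
      rw [hsh, ← heqxy, hxy2r]
    have hPt := stmt13_line_mid hbxF 0 (δce + δxy)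
    have hFP : dist F (bx pt) ≤ r := by
      have h := stmt13_mid_lip hgeo hconv hF1 hF2 hPt.1 hPt.2
      rw [dist_self] at h
      rw [dist_comm (bc δce) (bx (δce + δxy)), hP'C] at h
      rw [hptdef]
      linarith
    have hPQ' : dist (bx 0) (bc (-δxy)) = 2 * r := by
      have hsh := stmt13_shift hgeo hconv haF hbxF hbcF hbxB hbcB δxy 0 (-δxy)
      rw [show δxy + -δxy = 0 from by ring, zero_add] at hsh
      rw [hsh, ← heqxy, hxy2r]
    have hQt := stmt13_line_mid hbcF (-δxy) δce
    have hFQ : dist F (bc ((-δxy + δce) / 2)) ≤ r := by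
      have h := stmt13_mid_lip hgeo hconv hF1 hF2 hQt.1 hQt.2
      rw [dist_self, hPQ'] at h
      linarith
    have hqteq : (-δxy + δce) / 2 = qt := by rw [hqtdef]; ring
    rw [hqteq] at hFQ
    have hPtQt : dist (bx pt) (bc qt) = 2 * r := by
      have hsh := stmt13_shift hgeo hconv haF hbxF hbcF hbxB hbcB δxy 0 qt
      rw [zero_add, show δxy + qt = pt from by rw [hqtdef, hptdef]; ring] at hsh
      rw [hsh, ← heqxy, hxy2r]
    have htriF := dist_triangle (bx pt) F (bc qt)
    have hcommF : dist (bx pt) F = dist F (bx pt) := dist_comm _ _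
    have hFPe : dist (bx pt) F = r := by
      rw [hPtQt] at htriF
      linarith
    have hFQe : dist F (bc qt) = r := by
      rw [hPtQt] at htriF
      linarith
    set v₀ : ℝ := pt - δ₁ with hv₀def
    have hD : dist (bm v₀) (bx pt) = r := by
      have hsh := stmt13_shift hgeo hconv haF hbmF hbxF hbmB hbxB 0 δ₁ v₀
      rw [zero_add, show δ₁ + v₀ = pt from by rw [hv₀def]; ring] at hsh
      rw [hsh, hbm0, dist_comm]
      exact hAm
    have hE : dist (bm v₀) (bc qt) = r := by
      have hsh := stmt13_shift hgeo hconv haF hbmF hbcF hbmB hbcB 0 (-δ₂) v₀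
      rw [zero_add] at hsh
      rw [show -δ₂ + v₀ = qt from by
        rw [hv₀def, hqtdef, hptdef, ← hδsum]; ring] at hsh
      rw [hsh, hbm0]
      exact hmC
    have hFbm : bm v₀ = F := by
      apply stmt13_mid_unique hconv (x := bx pt) (y := bc qt)
      · rw [hPtQt, dist_comm (bx pt) (bm v₀), hD]; ring
      · rw [hPtQt, hE]; ring
      · rw [hPtQt, hFPe]; ring
      · rw [hPtQt, hFQe]; ring
    -- ρ m F = 0
    obtain ⟨bF, uF, KF, hbFF, hbFB, hbF0, hbFr, hbFL, hbFP⟩ := master F hFY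
    have hlineF : ∀ v : ℝ, bF v = bm (v₀ + v) := by
      intro v
      have hsh := stmt13_shift hgeo hconv haF hbmF hbFF hbmB hbFB v₀ 0 v
      rw [zero_add] at hsh
      rw [hbF0, hFbm, dist_self] at hsh
      exact (dist_eq_zero.mp hsh).symm
    have hrmF : ρ m F = 0 := by
      apply le_antisymm ?_ (rho_nonneg m F)
      rw [hρ m F]
      apply csInf_le (Sbdd m F)
      refine ⟨max v₀ 0, max (-v₀) 0, le_max_right _ _, le_max_right _ _, ?_⟩
      rw [hbmr _ (le_max_right _ _), hbFr _ (le_max_right _ _), hlineF]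
      rw [hbmF]
      symm
      rw [abs_eq_zero]
      rcases le_total 0 v₀ with h | h
      · rw [max_eq_left h, max_eq_right (by linarith : -v₀ ≤ 0)]; ring
      · rw [max_eq_right h, max_eq_left (by linarith : (0:ℝ) ≤ -v₀)]; ring
    -- G lies on the line bn
    set pt2 : ℝ := (0 + δxz) / 2 with hpt2def
    set qt2 : ℝ := (-δxz + 0) / 2 with hqt2def
    have hP'E : dist (bx δxz) (be 0) = 2 * r' := by rw [← heqxz, hxz2r]
    have hPt2 := stmt13_line_mid hbxF 0 δxz
    have hGP : dist G (bx pt2) ≤ r' := by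
      have h := stmt13_mid_lip hgeo hconv hG1 hG2 hPt2.1 hPt2.2
      rw [dist_self] at h
      rw [dist_comm (be 0) (bx δxz), hP'E] at h
      rw [hpt2def]
      linarith
    have hPQ2' : dist (bx 0) (be (-δxz)) = 2 * r' := by
      have hsh := stmt13_shift hgeo hconv haF hbxF hbeF hbxB hbeB δxz 0 (-δxz)
      rw [show δxz + -δxz = 0 from by ring, zero_add] at hsh
      rw [hsh, ← heqxz, hxz2r]
    have hQt2 := stmt13_line_mid hbeF (-δxz) 0
    have hGQ : dist G (be qt2) ≤ r' := by
      have h := stmt13_mid_lip hgeo hconv hG1 hG2 hQt2.1 hQt2.2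
      rw [dist_self, hPQ2'] at h
      rw [hqt2def]
      linarith
    have hPt2Qt2 : dist (bx pt2) (be qt2) = 2 * r' := by
      have hsh := stmt13_shift hgeo hconv haF hbxF hbeF hbxB hbeB δxz 0 qt2
      rw [zero_add, show δxz + qt2 = pt2 from by rw [hqt2def, hpt2def]; ring] at hsh
      rw [hsh, ← heqxz, hxz2r]
    have htriG := dist_triangle (bx pt2) G (be qt2)
    have hcommG : dist (bx pt2) G = dist G (bx pt2) := dist_comm _ _
    have hGPe : dist (bx pt2) G = r' := by
      rw [hPt2Qt2] at htriG
      linarith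
    have hGQe : dist G (be qt2) = r' := by
      rw [hPt2Qt2] at htriG
      linarith
    set v₀' : ℝ := pt2 - δ₁' with hv₀'def
    have hD' : dist (bn v₀') (bx pt2) = r' := by
      have hsh := stmt13_shift hgeo hconv haF hbnF hbxF hbnB hbxB 0 δ₁' v₀'
      rw [zero_add, show δ₁' + v₀' = pt2 from by rw [hv₀'def]; ring] at hsh
      rw [hsh, hbn0, dist_comm]
      exact hAn
    have hE' : dist (bn v₀') (be qt2) = r' := by
      have hsh := stmt13_shift hgeo hconv haF hbnF hbeF hbnB hbeB 0 (-δ₂') v₀'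
      rw [zero_add] at hsh
      rw [show -δ₂' + v₀' = qt2 from by
        rw [hv₀'def, hqt2def, hpt2def, ← hδsum']; ring] at hsh
      rw [hsh, hbn0]
      exact hnE
    have hGbn : bn v₀' = G := by
      apply stmt13_mid_unique hconv (x := bx pt2) (y := be qt2)
      · rw [hPt2Qt2, dist_comm (bx pt2) (bn v₀'), hD']; ring
      · rw [hPt2Qt2, hE']; ring
      · rw [hPt2Qt2, hGPe]; ring
      · rw [hPt2Qt2, hGQe]; ring
    obtain ⟨bG, uG, KG, hbGF, hbGB, hbG0, hbGr, hbGL, hbGP⟩ := master G hGY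
    have hlineG : ∀ v : ℝ, bG v = bn (v₀' + v) := by
      intro v
      have hsh := stmt13_shift hgeo hconv haF hbnF hbGF hbnB hbGB v₀' 0 v
      rw [zero_add] at hsh
      rw [hbG0, hGbn, dist_self] at hsh
      exact (dist_eq_zero.mp hsh).symm
    have hrnG : ρ n G = 0 := by
      apply le_antisymm ?_ (rho_nonneg n G)
      rw [hρ n G]
      apply csInf_le (Sbdd n G)
      refine ⟨max v₀' 0, max (-v₀') 0, le_max_right _ _, le_max_right _ _, ?_⟩
      rw [hbnr _ (le_max_right _ _), hbGr _ (le_max_right _ _), hlineG]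
      rw [hbnF]
      symm
      rw [abs_eq_zero]
      rcases le_total 0 v₀' with h | h
      · rw [max_eq_left h, max_eq_right (by linarith : -v₀' ≤ 0)]; ring
      · rw [max_eq_right h, max_eq_left (by linarith : (0:ℝ) ≤ -v₀')]; ring
    -- ρ F G ≤ dist F G
    obtain ⟨δFG, hminFG, heqFG⟩ := rhoval F G bF bG uF KF uG KG hbFF hbFB hbFr hbGF hbGB hbGr
    have hFGle : ρ F G ≤ dist F G := by
      rw [heqFG]
      calc dist (bF δFG) (bG 0) ≤ dist (bF 0) (bG 0) := hminFG 0
        _ = dist F G := by rw [hbF0, hbG0]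
    -- assemble
    have h1 := rho_tri m hm F hFY n hn
    have h2 := rho_tri F hFY G hGY n hn
    have hsymGn : ρ G n = ρ n G := rho_symm G n
    have hyz : ρ y z = dist (bc δce) (be 0) := heqce
    rw [hrmF] at h1
    rw [hsymGn, hrnG] at h2
    linarith
  exact ⟨goal1, goal2, goal3⟩
end
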